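/- arXiv:2410.20504 — 6 statements merged into one kernel-verified Lean document; each statement's English description precedes it below -/
import Mathlib

section
/- Let κ be a regular cardinal and let F : C → D be a functor between categories that admit all filtered colimits. Then F preserves all filtered colimits if and only if F preserves κ-filtered colimits and preserves colimits indexed by κ-small filtered categories. -/
universe u v₁ v₂ u₁ u₂

open CategoryTheory Limits

/-- A category `J` is `κ`-filtered if every diagram indexed by a category with fewer
than `κ` morphisms admits a cocone. -/
def IsKappaFiltered (κ : Cardinal.{u}) (J : Type u) [SmallCategory J] : Prop :=
  ∀ (A : Type u) [SmallCategory A], Cardinal.mk (Arrow A) < κ →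
    ∀ G : A ⥤ J, Nonempty (Cocone G)

/-- A category `J` is `κ`-small if it has fewer than `κ` morphisms. -/
def IsKappaSmall (κ : Cardinal.{u}) (J : Type u) [SmallCategory J] : Prop :=
  Cardinal.mk (Arrow J) < κ

namespace Stmt3Aux
variable (J : Type u) [SmallCategory J]

/-- Bundled morphisms of `J`. -/
abbrev Mor := Σ p : J × J, p.1 ⟶ p.2

variable {J}

@[simps] def mor {x y : J} (f : x ⟶ y) : Mor J := ⟨(x, y), f⟩

/-- A (non-full) subcategory of `J`, given by sets of objects and morphisms. -/
structure Subcat : Type u where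
  objs : Set J
  homs : Set (Mor J)
  src_mem : ∀ {m : Mor J}, m ∈ homs → m.1.1 ∈ objs
  tgt_mem : ∀ {m : Mor J}, m ∈ homs → m.1.2 ∈ objs
  id_mem : ∀ {x : J}, x ∈ objs → mor (𝟙 x) ∈ homs
  comp_mem : ∀ {x y z : J} {f : x ⟶ y} {g : y ⟶ z},
    mor f ∈ homs → mor g ∈ homs → mor (f ≫ g) ∈ homs

instance : Preorder (Subcat (J := J)) where
  le S T := S.objs ⊆ T.objs ∧ S.homs ⊆ T.homs
  le_refl S := ⟨subset_rfl, subset_rfl⟩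
  le_trans S T U h h' := ⟨h.1.trans h'.1, h.2.trans h'.2⟩

variable (S T : Subcat (J := J))

/-- The carrier type of a subcategory. -/
abbrev Subcat.cat : Type u := S.objs

instance : SmallCategory S.cat where
  Hom x y := {f : x.1 ⟶ y.1 // mor f ∈ S.homs}
  id x := ⟨𝟙 x.1, S.id_mem x.2⟩
  comp f g := ⟨f.1 ≫ g.1, S.comp_mem f.2 g.2⟩
  id_comp f := Subtype.ext (Category.id_comp _)
  comp_id f := Subtype.ext (Category.comp_id _)
  assoc f g h := Subtype.ext (Category.assoc _ _ _)

/-- Inclusion functor. -/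
@[simps] def Subcat.incl : S.cat ⥤ J where
  obj x := x.1
  map f := f.1

variable {S T}

/-- The functor between carriers induced by `S ≤ T`. -/
@[simps] def Subcat.up (h : S ≤ T) : S.cat ⥤ T.cat where
  obj x := ⟨x.1, h.1 x.2⟩
  map f := ⟨f.1, h.2 f.2⟩

example (h : S ≤ T) : Subcat.up h ⋙ T.incl = S.incl := rfl


/-- A good subcategory: filtered and `κ`-small. -/
structure Subcat.Good (κ : Cardinal.{u}) (S : Subcat (J := J)) : Prop where
  nonempty : S.objs.Nonempty
  cocone_objs : ∀ {x y : J}, x ∈ S.objs → y ∈ S.objs →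
    ∃ (z : J) (f : x ⟶ z) (g : y ⟶ z), mor f ∈ S.homs ∧ mor g ∈ S.homs
  cocone_maps : ∀ {x y : J} (f g : x ⟶ y), mor f ∈ S.homs → mor g ∈ S.homs →
    ∃ (z : J) (h : y ⟶ z), mor h ∈ S.homs ∧ f ≫ h = g ≫ h
  small_objs : Cardinal.mk S.objs < κ
  small_homs : Cardinal.mk S.homs < κ

theorem Subcat.Good.isFiltered {κ : Cardinal.{u}} {S : Subcat (J := J)} (h : S.Good κ) :
    IsFiltered S.cat := by
  have : Nonempty S.cat := by obtain ⟨x, hx⟩ := h.nonempty; exact ⟨⟨x, hx⟩⟩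
  refine { cocone_objs := ?_, cocone_maps := ?_ }
  · rintro ⟨x, hx⟩ ⟨y, hy⟩
    obtain ⟨z, f, g, hf, hg⟩ := h.cocone_objs hx hy
    exact ⟨⟨z, S.tgt_mem hf⟩, ⟨f, hf⟩, ⟨g, hg⟩, trivial⟩
  · rintro ⟨x, hx⟩ ⟨y, hy⟩ ⟨f, hf⟩ ⟨g, hg⟩
    obtain ⟨z, e, he, hfg⟩ := h.cocone_maps f g hf hg
    exact ⟨⟨z, S.tgt_mem he⟩, ⟨e, he⟩, Subtype.ext hfg⟩

theorem Subcat.mk_arrow_le (S : Subcat (J := J)) :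
    Cardinal.mk (Arrow S.cat) ≤ Cardinal.mk S.homs := by
  refine Cardinal.mk_le_of_injective (f := fun a =>
    (⟨⟨(a.left.1, a.right.1), a.hom.1⟩, a.hom.2⟩ : S.homs)) ?_
  rintro ⟨⟨l, hl⟩, ⟨r, hr⟩, ⟨m, hm⟩⟩ ⟨⟨l', hl'⟩, ⟨r', hr'⟩, ⟨m', hm'⟩⟩ h
  have h' := congrArg Subtype.val h
  injection h' with hp hm2
  obtain ⟨h1, h2⟩ := Prod.mk.injEq _ _ _ _ |>.mp hp
  subst h1; subst h2
  obtain rfl := eq_of_heq hm2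
  rfl


section Closure
open IsFiltered
variable [IsFiltered J]

/-- Parallel pairs of bundled morphisms. -/
def PP (H : Set (Mor J)) : Type u := {q : Mor J × Mor J // q.1 ∈ H ∧ q.2 ∈ H ∧ q.1.1 = q.2.1}

def PP.f {H : Set (Mor J)} (q : PP H) : q.1.1.1.1 ⟶ q.1.1.1.2 := q.1.1.2

def PP.g {H : Set (Mor J)} (q : PP H) : q.1.1.1.1 ⟶ q.1.1.1.2 :=
  eqToHom (congrArg Prod.fst q.2.2.2) ≫ q.1.2.2 ≫ eqToHom (congrArg Prod.snd q.2.2.2).symm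

@[simp] theorem PP.f_mk {H : Set (Mor J)} {x y : J} (f g : x ⟶ y) (hf : mor f ∈ H)
    (hg : mor g ∈ H) : PP.f (⟨(mor f, mor g), hf, hg, rfl⟩ : PP H) = f := rfl

@[simp] theorem PP.g_mk {H : Set (Mor J)} {x y : J} (f g : x ⟶ y) (hf : mor f ∈ H)
    (hg : mor g ∈ H) : PP.g (⟨(mor f, mor g), hf, hg, rfl⟩ : PP H) = g := by
  show eqToHom rfl ≫ g ≫ eqToHom rfl = g
  simp

theorem PP.mk_le {H : Set (Mor J)} : Cardinal.mk (PP H) ≤ Cardinal.mk H * Cardinal.mk H := by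
  have := Cardinal.mk_le_of_injective (f := fun q : PP H =>
    ((⟨q.1.1, q.2.1⟩, ⟨q.1.2, q.2.2.1⟩) : H × H)) ?_
  · refine this.trans ?_
    simp [Cardinal.mk_prod]
  · rintro ⟨⟨m, m'⟩, h⟩ ⟨⟨n, n'⟩, h'⟩ e
    simp only [Prod.mk.injEq, Subtype.mk.injEq] at e
    exact Subtype.ext (Prod.ext e.1 e.2)

/-- Composable pairs of bundled morphisms. -/
def CP (H : Set (Mor J)) : Type u := {q : Mor J × Mor J // q.1 ∈ H ∧ q.2 ∈ H ∧ q.1.1.2 = q.2.1.1}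

def CP.comp {H : Set (Mor J)} (q : CP H) : Mor J :=
  ⟨(q.1.1.1.1, q.1.2.1.2), q.1.1.2 ≫ eqToHom q.2.2.2 ≫ q.1.2.2⟩

@[simp] theorem CP.comp_mk {H : Set (Mor J)} {x y z : J} (f : x ⟶ y) (g : y ⟶ z)
    (hf : mor f ∈ H) (hg : mor g ∈ H) :
    CP.comp (⟨(mor f, mor g), hf, hg, rfl⟩ : CP H) = mor (f ≫ g) := by
  show mor (f ≫ eqToHom rfl ≫ g) = mor (f ≫ g)
  simp

theorem CP.mk_le {H : Set (Mor J)} : Cardinal.mk (CP H) ≤ Cardinal.mk H * Cardinal.mk H := by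
  have := Cardinal.mk_le_of_injective (f := fun q : CP H =>
    ((⟨q.1.1, q.2.1⟩, ⟨q.1.2, q.2.2.1⟩) : H × H)) ?_
  · refine this.trans ?_
    simp [Cardinal.mk_prod]
  · rintro ⟨⟨m, m'⟩, h⟩ ⟨⟨n, n'⟩, h'⟩ e
    simp only [Prod.mk.injEq, Subtype.mk.injEq] at e
    exact Subtype.ext (Prod.ext e.1 e.2)

/-- One closure step, objects. -/
def stepO (O : Set J) (H : Set (Mor J)) : Set J :=
  O ∪ Set.range (fun m : H => m.1.1.1) ∪ Set.range (fun m : H => m.1.1.2)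
    ∪ Set.range (fun q : O × O => max (q.1.1 : J) (q.2.1 : J))
    ∪ Set.range (fun q : PP H => coeq q.f q.g)

/-- One closure step, morphisms. -/
def stepH (O : Set J) (H : Set (Mor J)) : Set (Mor J) :=
  H ∪ Set.range (fun x : O => mor (𝟙 (x : J)))
    ∪ Set.range (fun q : O × O => mor (leftToMax (q.1.1 : J) (q.2.1 : J)))
    ∪ Set.range (fun q : O × O => mor (rightToMax (q.1.1 : J) (q.2.1 : J)))
    ∪ Set.range (fun q : PP H => mor (coeqHom q.f q.g))
    ∪ Set.range (fun q : CP H => q.comp)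

/-- The closure chain. -/
def chain (O : Set J) (H : Set (Mor J)) : ℕ → Set J × Set (Mor J)
  | 0 => (O ∪ Set.range (fun m : H => m.1.1.1) ∪ Set.range (fun m : H => m.1.1.2), H)
  | n + 1 => (stepO (chain O H n).1 (chain O H n).2, stepH (chain O H n).1 (chain O H n).2)

theorem chain_mono_succ (O : Set J) (H : Set (Mor J)) (n : ℕ) :
    (chain O H n).1 ⊆ (chain O H (n + 1)).1 ∧ (chain O H n).2 ⊆ (chain O H (n + 1)).2 := by
  constructor
  · intro x hx
    exact Or.inl (Or.inl (Or.inl (Or.inl hx)))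
  · intro m hm
    exact Or.inl (Or.inl (Or.inl (Or.inl (Or.inl hm))))

theorem chain_mono (O : Set J) (H : Set (Mor J)) {m n : ℕ} (h : m ≤ n) :
    (chain O H m).1 ⊆ (chain O H n).1 ∧ (chain O H m).2 ⊆ (chain O H n).2 := by
  induction n with
  | zero => obtain rfl := Nat.le_zero.mp h; exact ⟨subset_rfl, subset_rfl⟩
  | succ n ih =>
    rcases Nat.le_succ_iff_eq_or_le.mp h with rfl | h'
    · exact ⟨subset_rfl, subset_rfl⟩
    · exact ⟨(ih h').1.trans (chain_mono_succ O H n).1, (ih h').2.trans (chain_mono_succ O H n).2⟩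


variable (O : Set J) (H : Set (Mor J))

/-- The closure of `(O, H)` as a subcategory. -/
def closure : Subcat (J := J) where
  objs := ⋃ n : ULift.{u} ℕ, (chain O H n.down).1
  homs := ⋃ n : ULift.{u} ℕ, (chain O H n.down).2
  src_mem := by
    rintro m hm
    obtain ⟨_, ⟨⟨n⟩, rfl⟩, hm⟩ := hm
    exact Set.mem_iUnion.mpr ⟨⟨n + 1⟩, Or.inl (Or.inl (Or.inl (Or.inr ⟨⟨m, hm⟩, rfl⟩)))⟩
  tgt_mem := by
    rintro m hm
    obtain ⟨_, ⟨⟨n⟩, rfl⟩, hm⟩ := hm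
    exact Set.mem_iUnion.mpr ⟨⟨n + 1⟩, Or.inl (Or.inl (Or.inr ⟨⟨m, hm⟩, rfl⟩))⟩
  id_mem := by
    rintro x hx
    obtain ⟨_, ⟨⟨n⟩, rfl⟩, hx⟩ := hx
    exact Set.mem_iUnion.mpr ⟨⟨n + 1⟩,
      Or.inl (Or.inl (Or.inl (Or.inl (Or.inr ⟨⟨x, hx⟩, rfl⟩))))⟩
  comp_mem := by
    rintro x y z f g hf hg
    obtain ⟨_, ⟨⟨n⟩, rfl⟩, hf⟩ := hf
    obtain ⟨_, ⟨⟨n'⟩, rfl⟩, hg⟩ := hg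
    have hf' := (chain_mono O H (Nat.le_max_left n n')).2 hf
    have hg' := (chain_mono O H (Nat.le_max_right n n')).2 hg
    refine Set.mem_iUnion.mpr ⟨⟨Nat.max n n' + 1⟩, Or.inr ?_⟩
    exact ⟨⟨(mor f, mor g), hf', hg', rfl⟩, CP.comp_mk f g hf' hg'⟩

theorem subset_closure_objs : O ⊆ (closure O H).objs := fun x hx =>
  Set.mem_iUnion.mpr ⟨⟨0⟩, Or.inl (Or.inl hx)⟩

theorem subset_closure_homs : H ⊆ (closure O H).homs := fun m hm =>
  Set.mem_iUnion.mpr ⟨⟨0⟩, hm⟩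

theorem closure_cocone_objs {x y : J} (hx : x ∈ (closure O H).objs)
    (hy : y ∈ (closure O H).objs) :
    ∃ (z : J) (f : x ⟶ z) (g : y ⟶ z),
      mor f ∈ (closure O H).homs ∧ mor g ∈ (closure O H).homs := by
  obtain ⟨_, ⟨⟨n⟩, rfl⟩, hx⟩ := hx
  obtain ⟨_, ⟨⟨n'⟩, rfl⟩, hy⟩ := hy
  have hx' := (chain_mono O H (Nat.le_max_left n n')).1 hx
  have hy' := (chain_mono O H (Nat.le_max_right n n')).1 hy
  set k := Nat.max n n'
  refine ⟨max x y, leftToMax x y, rightToMax x y, ?_, ?_⟩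
  · exact Set.mem_iUnion.mpr ⟨⟨k + 1⟩,
      Or.inl (Or.inl (Or.inl (Or.inr ⟨(⟨x, hx'⟩, ⟨y, hy'⟩), rfl⟩)))⟩
  · exact Set.mem_iUnion.mpr ⟨⟨k + 1⟩,
      Or.inl (Or.inl (Or.inr ⟨(⟨x, hx'⟩, ⟨y, hy'⟩), rfl⟩))⟩

theorem closure_cocone_maps {x y : J} (f g : x ⟶ y) (hf : mor f ∈ (closure O H).homs)
    (hg : mor g ∈ (closure O H).homs) :
    ∃ (z : J) (h : y ⟶ z), mor h ∈ (closure O H).homs ∧ f ≫ h = g ≫ h := by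
  obtain ⟨_, ⟨⟨n⟩, rfl⟩, hf⟩ := hf
  obtain ⟨_, ⟨⟨n'⟩, rfl⟩, hg⟩ := hg
  have hf' := (chain_mono O H (Nat.le_max_left n n')).2 hf
  have hg' := (chain_mono O H (Nat.le_max_right n n')).2 hg
  set k := Nat.max n n'
  set q : PP (chain O H k).2 := ⟨(mor f, mor g), hf', hg', rfl⟩ with hq
  refine ⟨coeq q.f q.g, coeqHom q.f q.g, ?_, ?_⟩
  · exact Set.mem_iUnion.mpr ⟨⟨k + 1⟩, Or.inl (Or.inr ⟨q, rfl⟩)⟩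
  · have h1 : q.f = f := rfl
    have h2 : q.g = g := PP.g_mk f g hf' hg'
    exact (congrArg (fun u : x ⟶ y => u ≫ coeqHom q.f q.g) h1.symm).trans
      ((coeq_condition q.f q.g).trans (congrArg (fun u : x ⟶ y => u ≫ coeqHom q.f q.g) h2))

variable {κ : Cardinal.{u}}

theorem mk_stepO_lt (hκ : κ.IsRegular) {O : Set J} {H : Set (Mor J)} (hO : Cardinal.mk O < κ)
    (hH : Cardinal.mk H < κ) : Cardinal.mk (stepO O H) < κ := by
  have haleph := hκ.aleph0_le
  have hOO : Cardinal.mk (O × O : Type u) < κ := by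
    rw [Cardinal.mk_prod]; simpa using Cardinal.mul_lt_of_lt haleph hO hO
  have hPP : Cardinal.mk (PP H) < κ :=
    PP.mk_le.trans_lt (Cardinal.mul_lt_of_lt haleph hH hH)
  refine lt_of_le_of_lt ((Cardinal.mk_union_le _ _).trans
    (add_le_add ((Cardinal.mk_union_le _ _).trans (add_le_add ((Cardinal.mk_union_le _ _).trans
      (add_le_add ((Cardinal.mk_union_le _ _).trans (add_le_add le_rfl
        (Cardinal.mk_range_le))) (Cardinal.mk_range_le))) (Cardinal.mk_range_le)))
      Cardinal.mk_range_le)) ?_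
  refine Cardinal.add_lt_of_lt haleph (Cardinal.add_lt_of_lt haleph (Cardinal.add_lt_of_lt haleph
    (Cardinal.add_lt_of_lt haleph hO hH) hH) hOO) hPP

theorem mk_stepH_lt (hκ : κ.IsRegular) {O : Set J} {H : Set (Mor J)} (hO : Cardinal.mk O < κ)
    (hH : Cardinal.mk H < κ) : Cardinal.mk (stepH O H) < κ := by
  have haleph := hκ.aleph0_le
  have hOO : Cardinal.mk (O × O : Type u) < κ := by
    rw [Cardinal.mk_prod]; simpa using Cardinal.mul_lt_of_lt haleph hO hO
  have hPP : Cardinal.mk (PP H) < κ :=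
    PP.mk_le.trans_lt (Cardinal.mul_lt_of_lt haleph hH hH)
  have hCP : Cardinal.mk (CP H) < κ :=
    CP.mk_le.trans_lt (Cardinal.mul_lt_of_lt haleph hH hH)
  refine lt_of_le_of_lt ((Cardinal.mk_union_le _ _).trans
    (add_le_add ((Cardinal.mk_union_le _ _).trans (add_le_add ((Cardinal.mk_union_le _ _).trans
      (add_le_add ((Cardinal.mk_union_le _ _).trans (add_le_add ((Cardinal.mk_union_le _ _).trans
        (add_le_add le_rfl Cardinal.mk_range_le)) Cardinal.mk_range_le)) Cardinal.mk_range_le))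
        Cardinal.mk_range_le)) Cardinal.mk_range_le)) ?_
  exact Cardinal.add_lt_of_lt haleph (Cardinal.add_lt_of_lt haleph (Cardinal.add_lt_of_lt haleph
    (Cardinal.add_lt_of_lt haleph (Cardinal.add_lt_of_lt haleph hH hO) hOO) hOO) hPP) hCP

theorem mk_chain_lt (hκ : κ.IsRegular) {O : Set J} {H : Set (Mor J)} (hO : Cardinal.mk O < κ)
    (hH : Cardinal.mk H < κ) (n : ℕ) :
    Cardinal.mk (chain O H n).1 < κ ∧ Cardinal.mk (chain O H n).2 < κ := by
  have haleph := hκ.aleph0_le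
  induction n with
  | zero =>
    refine ⟨?_, hH⟩
    refine lt_of_le_of_lt ((Cardinal.mk_union_le _ _).trans
      (add_le_add ((Cardinal.mk_union_le _ _).trans (add_le_add le_rfl Cardinal.mk_range_le))
        Cardinal.mk_range_le)) ?_
    exact Cardinal.add_lt_of_lt haleph (Cardinal.add_lt_of_lt haleph hO hH) hH
  | succ n ih => exact ⟨mk_stepO_lt hκ ih.1 ih.2, mk_stepH_lt hκ ih.1 ih.2⟩

theorem mk_closure_lt (hκ : κ.IsRegular) (hκ' : Cardinal.aleph0 < κ) {O : Set J} {H : Set (Mor J)} (hO : Cardinal.mk O < κ)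
    (hH : Cardinal.mk H < κ) :
    Cardinal.mk (closure O H).objs < κ ∧ Cardinal.mk (closure O H).homs < κ := by
  have haleph := hκ.aleph0_le
  have hι : Cardinal.mk (ULift.{u} ℕ) = Cardinal.aleph0 := Cardinal.mk_eq_aleph0 _
  constructor
  · refine (Cardinal.mk_iUnion_le _).trans_lt ?_
    refine Cardinal.mul_lt_of_lt haleph (by rw [hι]; exact hκ') ?_
    exact Cardinal.iSup_lt_of_isRegular hκ (by rw [hι]; exact hκ')
      fun n => (mk_chain_lt hκ hO hH n.down).1
  · refine (Cardinal.mk_iUnion_le _).trans_lt ?_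
    refine Cardinal.mul_lt_of_lt haleph (by rw [hι]; exact hκ') ?_
    exact Cardinal.iSup_lt_of_isRegular hκ (by rw [hι]; exact hκ')
      fun n => (mk_chain_lt hκ hO hH n.down).2

/-- The closure is a good subcategory (if nonempty input or `J` nonempty). -/
theorem closure_good (hκ : κ.IsRegular) (hκ' : Cardinal.aleph0 < κ) {O : Set J} {H : Set (Mor J)} (hO : Cardinal.mk O < κ)
    (hH : Cardinal.mk H < κ) (hne : O.Nonempty) : (closure O H).Good κ :=
  { nonempty := hne.mono (subset_closure_objs O H)
    cocone_objs := closure_cocone_objs O H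
    cocone_maps := closure_cocone_maps O H
    small_objs := (mk_closure_lt hκ hκ' hO hH).1
    small_homs := (mk_closure_lt hκ hκ' hO hH).2 }
end Closure

section Poset
variable (κ : Cardinal.{u}) (J : Type u) [SmallCategory J] [IsFiltered J]

/-- The poset of good subcategories. -/
abbrev GP : Type u := {S : Subcat (J := J) // S.Good κ}

instance : Preorder (GP κ J) := Subtype.preorder _

instance : SmallCategory (GP κ J) := Preorder.smallCategory _

instance (X Y : GP κ J) : Subsingleton (X ⟶ Y) :=
  show Subsingleton (ULift (PLift _)) from inferInstance

variable {κ J}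

theorem exists_good_above (hκ : κ.IsRegular) (hκ' : Cardinal.aleph0 < κ) {ι : Type u} (hι : Cardinal.mk ι < κ) (s : ι → GP κ J) :
    ∃ U : GP κ J, ∀ i, s i ≤ U := by
  obtain ⟨j₀⟩ := IsFiltered.nonempty (C := J)
  have haleph := hκ.aleph0_le
  set O : Set J := insert j₀ (⋃ i, (s i).1.objs) with hO
  set H : Set (Mor J) := ⋃ i, (s i).1.homs with hH
  have hOlt : Cardinal.mk O < κ := by
    refine (Cardinal.mk_insert_le).trans_lt (Cardinal.add_lt_of_lt haleph ?_ (lt_of_lt_of_le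
      Cardinal.one_lt_aleph0 haleph |>.trans_le le_rfl |>.trans_le le_rfl))
    · refine (Cardinal.mk_iUnion_le _).trans_lt (Cardinal.mul_lt_of_lt haleph hι ?_)
      exact Cardinal.iSup_lt_of_isRegular hκ hι fun i => (s i).2.small_objs
  have hHlt : Cardinal.mk H < κ := by
    refine (Cardinal.mk_iUnion_le _).trans_lt (Cardinal.mul_lt_of_lt haleph hι ?_)
    exact Cardinal.iSup_lt_of_isRegular hκ hι fun i => (s i).2.small_homs
  refine ⟨⟨closure O H, closure_good hκ hκ' hOlt hHlt ⟨j₀, Set.mem_insert _ _⟩⟩, fun i => ?_⟩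
  constructor
  · exact ((Set.subset_iUnion (fun i => (s i).1.objs) i).trans
      (Set.subset_insert _ _)).trans (subset_closure_objs O H)
  · exact (Set.subset_iUnion (fun i => (s i).1.homs) i).trans (subset_closure_homs O H)

theorem exists_good_single (hκ : κ.IsRegular) (hκ' : Cardinal.aleph0 < κ) (j : J) : ∃ S : GP κ J, j ∈ S.1.objs := by
  have h1 : Cardinal.mk ({j} : Set J) < κ := by
    simpa using Cardinal.one_lt_aleph0.trans_le hκ.aleph0_le
  have h2 : Cardinal.mk (∅ : Set (Mor J)) < κ := by
    simpa using Cardinal.aleph0_pos.trans_le hκ.aleph0_le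
  exact ⟨⟨closure {j} ∅, closure_good hκ hκ' h1 h2 ⟨j, rfl⟩⟩,
    subset_closure_objs _ _ rfl⟩

theorem exists_good_mor (hκ : κ.IsRegular) (hκ' : Cardinal.aleph0 < κ) {x y : J} (f : x ⟶ y) : ∃ S : GP κ J, mor f ∈ S.1.homs := by
  have h1 : Cardinal.mk ({x} : Set J) < κ := by
    simpa using Cardinal.one_lt_aleph0.trans_le hκ.aleph0_le
  have h2 : Cardinal.mk ({mor f} : Set (Mor J)) < κ := by
    simpa using Cardinal.one_lt_aleph0.trans_le hκ.aleph0_le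
  exact ⟨⟨closure {x} {mor f}, closure_good hκ hκ' h1 h2 ⟨x, rfl⟩⟩,
    subset_closure_homs _ _ rfl⟩

theorem gp_isFiltered (hκ : κ.IsRegular) (hκ' : Cardinal.aleph0 < κ) : IsFiltered (GP κ J) := by
  obtain ⟨j₀⟩ := IsFiltered.nonempty (C := J)
  obtain ⟨S₀, _⟩ := exists_good_single hκ hκ' j₀
  have : Nonempty (GP κ J) := ⟨S₀⟩
  refine { cocone_objs := fun S T => ?_, cocone_maps := fun S T f g => ?_ }
  · obtain ⟨U, hU⟩ := exists_good_above hκ hκ'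
      (ι := ULift.{u} Bool) (by simpa using Cardinal.nat_lt_aleph0 2 |>.trans hκ')
      (fun b => if b.down then S else T)
    exact ⟨U, homOfLE (by simpa using hU ⟨true⟩), homOfLE (by simpa using hU ⟨false⟩), trivial⟩
  · exact ⟨T, 𝟙 T, by apply Subsingleton.elim⟩

theorem gp_isKappaFiltered (hκ : κ.IsRegular) (hκ' : Cardinal.aleph0 < κ) :
    ∀ (A : Type u) [SmallCategory A], Cardinal.mk (Arrow A) < κ →
      ∀ G : A ⥤ GP κ J, Nonempty (Cocone G) := by
  intro A _ hA G
  have hobj : Cardinal.mk A < κ := by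
    refine lt_of_le_of_lt (Cardinal.mk_le_of_injective (f := fun a : A => Arrow.mk (𝟙 a)) ?_) hA
    intro a b h
    exact congrArg (fun e : Arrow A => e.left) h
  obtain ⟨U, hU⟩ := exists_good_above hκ hκ' hobj (fun a => G.obj a)
  exact ⟨⟨U, ⟨fun a => homOfLE (hU a), fun _ _ _ => Subsingleton.elim _ _⟩⟩⟩

end Poset

section Assembly
universe w₁ w₂
variable {κ : Cardinal.{u}} {J : Type u} [SmallCategory J] [IsFiltered J]
variable {E : Type w₁} [Category.{w₂} E] {L : J ⥤ E}

/-- Data for assembling a colimit over `J` from colimits over good subcategories. -/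
structure AssemblyData (κ : Cardinal.{u}) (L : J ⥤ E) where
  Gd : GP κ J ⥤ E
  ρ : ∀ (S : GP κ J) (j : S.1.cat), L.obj j.1 ⟶ Gd.obj S
  hρnat : ∀ (S : GP κ J) {j j' : S.1.cat} (f : j ⟶ j'), L.map f.1 ≫ ρ S j' = ρ S j
  hρG : ∀ {S T : GP κ J} (h : S ⟶ T) (j : S.1.cat),
    ρ S j ≫ Gd.map h = ρ T ((Subcat.up (leOfHom h)).obj j)

/-- The cocone over the restriction of `L` to a good subcategory. -/
@[simps] def AssemblyData.coconeρ (D : AssemblyData κ L) (S : GP κ J) :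
    Cocone (S.1.incl ⋙ L) where
  pt := D.Gd.obj S
  ι := { app := fun j => D.ρ S j
         naturality := fun j j' f => (D.hρnat S f).trans (Category.comp_id _).symm }

/-- A cocone over `L` together with a compatible cocone structure over `D.Gd`. -/
structure AssemblyCocone (D : AssemblyData κ L) where
  c : Cocone L
  g : ∀ S, D.Gd.obj S ⟶ c.pt
  hg : ∀ {S T : GP κ J} (h : S ⟶ T), D.Gd.map h ≫ g T = g S
  hgρ : ∀ (S : GP κ J) (j : S.1.cat), D.ρ S j ≫ g S = c.ι.app j.1

variable {D : AssemblyData κ L}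

/-- The induced cocone over `D.Gd`. -/
@[simps] def AssemblyCocone.coconeG (A : AssemblyCocone D) : Cocone D.Gd where
  pt := A.c.pt
  ι := { app := A.g
         naturality := fun S T h => by simp [A.hg h] }

theorem rho_congr (hκ : κ.IsRegular) (hκ' : Cardinal.aleph0 < κ)
    (e : Cocone D.Gd) {S T : GP κ J} (j : J) (hjS : j ∈ S.1.objs) (hjT : j ∈ T.1.objs) :
    D.ρ S ⟨j, hjS⟩ ≫ e.ι.app S = D.ρ T ⟨j, hjT⟩ ≫ e.ι.app T := by
  haveI : IsFiltered (GP κ J) := gp_isFiltered hκ hκ'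
  have key : ∀ (W : GP κ J) (hjW : j ∈ W.1.objs) (U : GP κ J) (h : W ⟶ U),
      D.ρ W ⟨j, hjW⟩ ≫ e.ι.app W = D.ρ U ⟨j, (leOfHom h).1 hjW⟩ ≫ e.ι.app U := by
    intro W hjW U h
    have := e.ι.naturality h
    simp only [Functor.const_obj_obj, Functor.const_obj_map, Category.comp_id] at this
    rw [← this, ← Category.assoc, D.hρG h ⟨j, hjW⟩]
    rfl
  have h1 := key S hjS (IsFiltered.max S T) (IsFiltered.leftToMax S T)
  have h2 := key T hjT (IsFiltered.max S T) (IsFiltered.rightToMax S T)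
  rw [h1, h2]

/-- Turn a cocone over `D.Gd` into a cocone over `L`. -/
noncomputable def coconeOfG (hκ : κ.IsRegular) (hκ' : Cardinal.aleph0 < κ)
    (e : Cocone D.Gd) : Cocone L where
  pt := e.pt
  ι :=
    { app := fun j => D.ρ (exists_good_single hκ hκ' j).choose
        ⟨j, (exists_good_single hκ hκ' j).choose_spec⟩ ≫
        e.ι.app (exists_good_single hκ hκ' j).choose
      naturality := fun x y f => by
        haveI : IsFiltered (GP κ J) := gp_isFiltered hκ hκ'
        obtain ⟨T, hT⟩ := exists_good_mor hκ hκ' f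
        obtain ⟨U, hSU, hTU, -⟩ := IsFilteredOrEmpty.cocone_objs (exists_good_single hκ hκ' x).choose T
        obtain ⟨V, hUV, hSV, -⟩ := IsFilteredOrEmpty.cocone_objs U (exists_good_single hκ hκ' y).choose
        have hTV : T ≤ V := (leOfHom hTU).trans (leOfHom hUV)
        have hfV : mor f ∈ V.1.homs := hTV.2 hT
        have hxV : x ∈ V.1.objs := V.1.src_mem hfV
        have hyV : y ∈ V.1.objs := V.1.tgt_mem hfV
        erw [rho_congr hκ hκ' e y (exists_good_single hκ hκ' y).choose_spec hyV,
          rho_congr hκ hκ' e x (exists_good_single hκ hκ' x).choose_spec hxV]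
        have hn := D.hρnat V (j := ⟨x, hxV⟩) (j' := ⟨y, hyV⟩) ⟨f, hfV⟩
        simp only [Functor.const_obj_obj, Functor.const_obj_map, Category.comp_id]
        erw [← Category.assoc, hn] }

theorem coconeOfG_app (hκ : κ.IsRegular) (hκ' : Cardinal.aleph0 < κ)
    (e : Cocone D.Gd) (S : GP κ J) (j : S.1.cat) :
    (coconeOfG hκ hκ' e).ι.app j.1 = D.ρ S j ≫ e.ι.app S := by
  obtain ⟨j, hj⟩ := j
  exact rho_congr hκ hκ' e j (exists_good_single hκ hκ' j).choose_spec hj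

/-- Lemma A : if `A.c` is a colimit of `L`, then `A.coconeG` is a colimit of `D.Gd`. -/
noncomputable def isColimitCoconeG (hκ : κ.IsRegular) (hκ' : Cardinal.aleph0 < κ)
    (A : AssemblyCocone D) (hcolim : ∀ S, IsColimit (D.coconeρ S))
    (hc : IsColimit A.c) : IsColimit A.coconeG where
  desc e := hc.desc (coconeOfG hκ hκ' e)
  fac e S := by
    refine (hcolim S).hom_ext fun j => ?_
    show D.ρ S j ≫ A.g S ≫ hc.desc (coconeOfG hκ hκ' e) = D.ρ S j ≫ e.ι.app S
    rw [← Category.assoc, A.hgρ S j, hc.fac, coconeOfG_app hκ hκ' e S j]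
  uniq e m hm := by
    have hm' : ∀ S, A.g S ≫ m = e.ι.app S := fun S => hm S
    refine hc.hom_ext fun j => ?_
    erw [hc.fac]
    show A.c.ι.app j ≫ m = (coconeOfG hκ hκ' e).ι.app j
    erw [← A.hgρ (exists_good_single hκ hκ' j).choose
      ⟨j, (exists_good_single hκ hκ' j).choose_spec⟩, Category.assoc, hm']
    rfl
  
/-- Restriction of a cocone over `L` to a good subcategory. -/
@[simps] def restrCocone (d : Cocone L) (S : GP κ J) : Cocone (S.1.incl ⋙ L) where
  pt := d.pt
  ι := { app := fun j => d.ι.app j.1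
         naturality := fun j j' f => by
           have := d.ι.naturality f.1
           exact this }

/-- The induced cocone over `D.Gd` from a cocone over `L`. -/
@[simps] def gcoconeOf (hcolim : ∀ S, IsColimit (D.coconeρ S)) (d : Cocone L) :
    Cocone D.Gd where
  pt := d.pt
  ι :=
    { app := fun S => (hcolim S).desc (restrCocone d S)
      naturality := fun S T h => by
        simp only [Functor.const_obj_obj, Functor.const_obj_map, Category.comp_id]
        refine (hcolim S).hom_ext fun j => ?_
        have h1 := D.hρG h j
        have fT := (hcolim T).fac (restrCocone d T) ((Subcat.up (leOfHom h)).obj j)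
        have fS := (hcolim S).fac (restrCocone d S) j
        simp only [AssemblyData.coconeρ_ι_app, restrCocone_ι_app] at fT fS h1 ⊢
        exact (Category.assoc _ _ _).symm.trans ((congrArg (· ≫ _) h1).trans
          (fT.trans (fS.symm.trans (congrArg (_ ≫ ·) (Category.comp_id _).symm)))) }

/-- Lemma B : if `A.coconeG` is a colimit of `D.Gd`, then `A.c` is a colimit of `L`. -/
noncomputable def isColimitOfCoconeG (hκ : κ.IsRegular) (hκ' : Cardinal.aleph0 < κ)
    (A : AssemblyCocone D) (hcolim : ∀ S, IsColimit (D.coconeρ S))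
    (hG : IsColimit A.coconeG) : IsColimit A.c where
  desc d := hG.desc (gcoconeOf hcolim d)
  fac d j := by
    rw [← A.hgρ (exists_good_single hκ hκ' j).choose
      ⟨j, (exists_good_single hκ hκ' j).choose_spec⟩]
    erw [Category.assoc]
    have h2 := hG.fac (gcoconeOf hcolim d) (exists_good_single hκ hκ' j).choose
    rw [show A.coconeG.ι.app (exists_good_single hκ hκ' j).choose =
      A.g (exists_good_single hκ hκ' j).choose from rfl] at h2
    erw [h2, gcoconeOf_ι_app]
    have h3 := (hcolim (exists_good_single hκ hκ' j).choose).fac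
      (restrCocone d (exists_good_single hκ hκ' j).choose)
      ⟨j, (exists_good_single hκ hκ' j).choose_spec⟩
    exact h3
  uniq d m hm := by
    refine hG.hom_ext fun S => ?_
    erw [hG.fac]
    show A.g S ≫ m = (gcoconeOf hcolim d).ι.app S
    rw [gcoconeOf_ι_app]
    refine (hcolim S).hom_ext fun j => ?_
    erw [(hcolim S).fac]
    show D.ρ S j ≫ A.g S ≫ m = (restrCocone d S).ι.app j
    rw [← Category.assoc, A.hgρ S j, hm j.1]
    rfl

end Assembly

section Build
universe w₁ w₂ w₃ w₄
variable {κ : Cardinal.{u}} {J : Type u} [SmallCategory J] [IsFiltered J]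
variable {E : Type w₁} [Category.{w₂} E] {K : J ⥤ E}
variable (t : ∀ S : GP κ J, Cocone (S.1.incl ⋙ K)) (ht : ∀ S, IsColimit (t S))

/-- Assembly data built from chosen colimit cocones. -/
@[simps] noncomputable def mkData : AssemblyData κ K where
  Gd :=
    { obj := fun S => (t S).pt
      map := fun {S T} h => (ht S).desc (Cocone.whisker (Subcat.up (leOfHom h)) (t T))
      map_id := fun S => (ht S).hom_ext fun j => by
        erw [(ht S).fac]
        exact (Category.comp_id _).symm
      map_comp := fun {S T U} h h' => (ht S).hom_ext fun j => by
        exact ((ht S).fac (Cocone.whisker (Subcat.up (leOfHom (h ≫ h'))) (t U)) j).trans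
          (((ht T).fac (Cocone.whisker (Subcat.up (leOfHom h')) (t U))
            ((Subcat.up (leOfHom h)).obj j)).symm.trans
          ((congrArg (· ≫ (ht T).desc (Cocone.whisker (Subcat.up (leOfHom h')) (t U)))
            ((ht S).fac (Cocone.whisker (Subcat.up (leOfHom h)) (t T)) j)).symm.trans
            (Category.assoc _ _ _))) }
  ρ := fun S j => (t S).ι.app j
  hρnat := fun S {j j'} f => by
    have := (t S).ι.naturality f
    exact this.trans (Category.comp_id _)
  hρG := fun {S T} h j => by
    exact (ht S).fac _ j

noncomputable def mkData_coconeρ_isColimit (S : GP κ J) : IsColimit ((mkData t ht).coconeρ S) :=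
  (ht S).ofIsoColimit (Cocones.ext (Iso.refl _) (by intro j; simp [mkData]; exact Category.comp_id _))

/-- Assembly cocone built from a cocone over `K`. -/
@[simps] noncomputable def mkCocone (c : Cocone K) : AssemblyCocone (mkData t ht) where
  c := c
  g := fun S => (ht S).desc (restrCocone c S)
  hg := fun {S T} h => (ht S).hom_ext fun j => by
    erw [← Category.assoc]
    have h1 : (t S).ι.app j ≫ (mkData t ht).Gd.map h = (t T).ι.app
        ((Subcat.up (leOfHom h)).obj j) := by
      have := (ht S).fac (Cocone.whisker (Subcat.up (leOfHom h)) (t T)) j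
      exact this
    exact ((congrArg (· ≫ (ht T).desc (restrCocone c T)) h1).trans ((ht T).fac _ _)).trans
      ((ht S).fac (restrCocone c S) j).symm
  hgρ := fun S j => by
    show (t S).ι.app j ≫ (ht S).desc (restrCocone c S) = c.ι.app j.1
    rw [(ht S).fac]
    rfl

variable {E' : Type w₃} [Category.{w₄} E'] (F : E ⥤ E')

/-- Transfer of assembly data along a functor. -/
@[simps] def AssemblyData.map (D : AssemblyData κ K) : AssemblyData κ (K ⋙ F) where
  Gd := D.Gd ⋙ F
  ρ := fun S j => F.map (D.ρ S j)
  hρnat := fun S {j j'} f => by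
    dsimp
    rw [← F.map_comp, D.hρnat S f]
  hρG := fun {S T} h j => by
    dsimp
    rw [← F.map_comp, D.hρG h j]
    rfl

/-- Transfer of an assembly cocone along a functor. -/
@[simps] def AssemblyCocone.map {D : AssemblyData κ K} (A : AssemblyCocone D) :
    AssemblyCocone (D.map F) where
  c := F.mapCocone A.c
  g := fun S => F.map (A.g S)
  hg := fun {S T} h => by
    dsimp
    exact (F.map_comp _ _).symm.trans (congrArg F.map (A.hg h))
  hgρ := fun S j => by
    dsimp
    exact (F.map_comp _ _).symm.trans (congrArg F.map (A.hgρ S j))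

noncomputable def AssemblyCocone.map_coconeG_isColimit {D : AssemblyData κ K} (A : AssemblyCocone D)
    (h : IsColimit (F.mapCocone A.coconeG)) : IsColimit (A.map F).coconeG :=
  h.ofIsoColimit (Cocones.ext (Iso.refl _) (by intro S; exact Category.comp_id _))

noncomputable def map_coconeρ_isColimit {D : AssemblyData κ K} (S : GP κ J)
    (h : IsColimit (F.mapCocone (D.coconeρ S))) : IsColimit ((D.map F).coconeρ S) :=
  h.ofIsoColimit (Cocones.ext (Iso.refl _) (by intro j; exact Category.comp_id _))

end Build

theorem isKappaFiltered_aleph0 (J : Type u) [SmallCategory J] (hJ : IsFiltered J) :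
    IsKappaFiltered Cardinal.aleph0 J := by
  intro A _ hA G
  haveI := hJ
  haveI : Finite (Arrow A) := Cardinal.lt_aleph0_iff_finite.mp hA
  haveI : Finite A := Finite.of_injective (fun a => Arrow.mk (𝟙 a))
    (fun a b h => congrArg Comma.left h)
  haveI : ∀ x y : A, Finite (x ⟶ y) := fun x y =>
    Finite.of_injective (fun f => Arrow.mk f) (Arrow.mk_injective x y)
  haveI : Fintype A := Fintype.ofFinite _
  haveI : FinCategory A :=
    { fintypeObj := inferInstance
      fintypeHom := fun x y => Fintype.ofFinite _ }
  exact ⟨IsFiltered.cocone G⟩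

theorem main (κ : Cardinal.{u}) (hκ : κ.IsRegular)
    {C : Type u₁} [Category.{v₁} C] {D : Type u₂} [Category.{v₂} D]
    (hC : ∀ (J : Type u) [SmallCategory J], IsFiltered J → HasColimitsOfShape J C)
    (hD : ∀ (J : Type u) [SmallCategory J], IsFiltered J → HasColimitsOfShape J D)
    (F : C ⥤ D)
    (h1 : ∀ (J : Type u) [SmallCategory J], IsFiltered J → IsKappaFiltered κ J →
          Nonempty (PreservesColimitsOfShape J F))
    (h2 : ∀ (J : Type u) [SmallCategory J], IsFiltered J → IsKappaSmall κ J →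
          Nonempty (PreservesColimitsOfShape J F))
    (J : Type u) [SmallCategory J] (hJ : IsFiltered J) :
    Nonempty (PreservesColimitsOfShape J F) := by
  haveI := hJ
  by_cases hκ' : Cardinal.aleph0 < κ
  · haveI : HasColimitsOfShape J C := hC J hJ
    haveI hGPfil : IsFiltered (GP κ J) := gp_isFiltered hκ hκ'
    obtain ⟨PF⟩ := h1 (GP κ J) hGPfil (gp_isKappaFiltered hκ hκ')
    haveI := PF
    have hsmall : ∀ S : GP κ J, PreservesColimitsOfShape S.1.cat F := fun S =>
      (h2 S.1.cat S.2.isFiltered (S.1.mk_arrow_le.trans_lt S.2.small_homs)).some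
    refine ⟨⟨fun {K} => ?_⟩⟩
    have tt : ∀ S : GP κ J, Σ' (tc : Cocone (S.1.incl ⋙ K)), IsColimit tc := fun S =>
      letI := hC S.1.cat S.2.isFiltered
      ⟨colimit.cocone _, colimit.isColimit _⟩
    set t : ∀ S : GP κ J, Cocone (S.1.incl ⋙ K) := fun S => (tt S).1 with hts
    have ht : ∀ S, IsColimit (t S) := fun S => (tt S).2
    have hcρ := mkData_coconeρ_isColimit t ht
    have hΨ := isColimitCoconeG hκ hκ' (mkCocone t ht (colimit.cocone K)) hcρ
      (colimit.isColimit K)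
    have hG' := (mkCocone t ht (colimit.cocone K)).map_coconeG_isColimit F
      (isColimitOfPreserves F hΨ)
    have hcρ' : ∀ S, IsColimit (((mkData t ht).map F).coconeρ S) := fun S =>
      haveI := hsmall S
      map_coconeρ_isColimit F S (isColimitOfPreserves F (hcρ S))
    have hfin := isColimitOfCoconeG hκ hκ' ((mkCocone t ht (colimit.cocone K)).map F)
      hcρ' hG'
    exact preservesColimit_of_preserves_colimit_cocone (colimit.isColimit K) hfin
  · have hk : κ = Cardinal.aleph0 := le_antisymm (not_lt.mp hκ') hκ.aleph0_le
    subst hk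
    exact h1 J hJ (isKappaFiltered_aleph0 J hJ)

end Stmt3Aux

/-- Let `κ` be a regular cardinal and `F : C ⥤ D` a functor between categories admitting
all filtered colimits. Then `F` preserves all filtered colimits if and only if `F`
preserves `κ`-filtered colimits and colimits indexed by `κ`-small filtered categories. -/
theorem stmt3 (κ : Cardinal.{u}) (hκ : κ.IsRegular)
    {C : Type u₁} [Category.{v₁} C] {D : Type u₂} [Category.{v₂} D]
    (hC : ∀ (J : Type u) [SmallCategory J], IsFiltered J → HasColimitsOfShape J C)
    (hD : ∀ (J : Type u) [SmallCategory J], IsFiltered J → HasColimitsOfShape J D)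
    (F : C ⥤ D) :
    (∀ (J : Type u) [SmallCategory J], IsFiltered J →
        Nonempty (PreservesColimitsOfShape J F)) ↔
      ((∀ (J : Type u) [SmallCategory J], IsFiltered J → IsKappaFiltered κ J →
          Nonempty (PreservesColimitsOfShape J F)) ∧
        (∀ (J : Type u) [SmallCategory J], IsFiltered J → IsKappaSmall κ J →
          Nonempty (PreservesColimitsOfShape J F))) := by
  constructor
  · intro h
    exact ⟨fun J _ hJ _ => h J hJ, fun J _ hJ _ => h J hJ⟩
  · rintro ⟨h1, h2⟩ J _ hJ
    exact Stmt3Aux.main κ hκ hC hD F h1 h2 J hJ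
end

section
/- Let S be a finite set with |S| ≥ 2 and let X : P(S) → C be a functor from the poset of subsets of S to a cocomplete category C. If X is left Kan extended from the full subposet of subsets of cardinality ≤ 1, then for every T ⊆ S and every pair of distinct elements i, j ∈ S \ T, the square formed by X(T) → X(T ∪ {i}), X(T) → X(T ∪ {j}), X(T ∪ {i}) → X(T ∪ {i,j}), X(T ∪ {j}) → X(T ∪ {i,j}) is a pushout square in C. -/
open CategoryTheory Limits


/-- Auxiliary compatibility: the two legs of a pushout cocone agree on anything below `T`. -/
lemma stmt4_cond {S : Type} [DecidableEq S] {C : Type*} [Category C]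
    (X : Finset S ⥤ C) (T : Finset S) (i j : S)
    (s : PushoutCocone (X.map (homOfLE (Finset.subset_insert i T)))
      (X.map (homOfLE (Finset.subset_insert j T))))
    {B : Finset S} (hB : B ≤ T) (u : B ⟶ insert j T) (v : B ⟶ insert i T) :
    X.map u ≫ s.inr = X.map v ≫ s.inl := by
  have hu : u = homOfLE hB ≫ homOfLE (Finset.subset_insert j T) := Subsingleton.elim _ _
  have hv : v = homOfLE hB ≫ homOfLE (Finset.subset_insert i T) := Subsingleton.elim _ _
  rw [hu, hv, X.map_comp, X.map_comp, Category.assoc, Category.assoc, ← s.condition]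

/-- Auxiliary cocone: from a pushout cocone on the 2-face, build a cocone on the
costructured-arrow diagram computing the pointwise Kan extension at `insert j (insert i T)`. -/
@[simps]
def stmt4Cocone {S : Type} [DecidableEq S] {C : Type*} [Category C]
    (X : Finset S ⥤ C) (T : Finset S) (i j : S)
    (s : PushoutCocone (X.map (homOfLE (Finset.subset_insert i T)))
      (X.map (homOfLE (Finset.subset_insert j T)))) :
    Cocone (CostructuredArrow.proj
        (ObjectProperty.ι (fun A : Finset S => A.card ≤ 1)) (insert j (insert i T)) ⋙
      (ObjectProperty.ι (fun A : Finset S => A.card ≤ 1) ⋙ X)) where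
  pt := s.pt
  ι :=
    { app := fun c =>
        if hc : j ∈ c.left.obj then
          X.map (homOfLE (show c.left.obj ≤ insert j T by
            intro a ha
            have : a = j := Finset.card_le_one.mp c.left.property a ha j hc
            rw [this]; exact Finset.mem_insert_self j T)) ≫ s.inr
        else
          X.map (homOfLE (show c.left.obj ≤ insert i T by
            intro a ha
            have h1 : a ∈ insert j (insert i T) := leOfHom c.hom ha
            rw [Finset.mem_insert] at h1
            rcases h1 with h | h
            · exact absurd (h ▸ ha) hc
            · exact h)) ≫ s.inl
      naturality := by
        intro c c' φ
        have hcc' : c.left.obj ≤ c'.left.obj := leOfHom φ.left.hom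
        dsimp
        rw [Category.comp_id]
        by_cases h' : j ∈ c'.left.obj
        · rw [dif_pos h']
          by_cases h : j ∈ c.left.obj
          · rw [dif_pos h, ← Category.assoc, ← X.map_comp]
            exact congrArg (· ≫ s.inr) (congrArg X.map (Subsingleton.elim _ _))
          · rw [dif_neg h, ← Category.assoc, ← X.map_comp]
            have hBT : c.left.obj ≤ T := by
              intro a ha
              have : a = j := Finset.card_le_one.mp c'.left.property a (hcc' ha) j h'
              exact absurd (this ▸ ha) h
            exact stmt4_cond X T i j s hBT _ _
        · have h : j ∉ c.left.obj := fun hh => h' (hcc' hh)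
          rw [dif_neg h', dif_neg h, ← Category.assoc, ← X.map_comp]
          exact congrArg (· ≫ s.inl) (congrArg X.map (Subsingleton.elim _ _)) }

/-- If a cube `X : P(S) ⥤ C` (with `|S| ≥ 2`, `C` cocomplete) is left Kan extended from the
subposet of subsets of cardinality ≤ 1 (i.e. is strongly cocartesian), then every
2-dimensional face is a pushout square. -/
theorem stmt4 {S : Type} [Fintype S] [DecidableEq S] (hS : 2 ≤ Fintype.card S)
    {C : Type*} [Category C] [HasColimits C]
    (X : Finset S ⥤ C)
    (hX : X.IsLeftKanExtension
      (𝟙 (ObjectProperty.ι (fun T : Finset S => T.card ≤ 1) ⋙ X)))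
    (T : Finset S) (i j : S) (hi : i ∉ T) (hj : j ∉ T) (hij : i ≠ j) :
    IsPushout
      (X.map (homOfLE (Finset.subset_insert i T)))
      (X.map (homOfLE (Finset.subset_insert j T)))
      (X.map (homOfLE (Finset.subset_insert j (insert i T))))
      (X.map (homOfLE (by
        intro a ha
        simp only [Finset.mem_insert] at ha ⊢
        tauto))) := by
  classical
  haveI := hX
  have mapeq : ∀ {a b : Finset S} (u v : a ⟶ b), X.map u = X.map v :=
    fun u v => congrArg X.map (Subsingleton.elim u v)
  have Xcomp : ∀ {a b c : Finset S} (u : a ⟶ b) (v : b ⟶ c) (h : a ≤ c),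
      X.map u ≫ X.map v = X.map (homOfLE h) := fun u v h => by
    rw [← X.map_comp]; exact mapeq _ _
  have hpt := Functor.isPointwiseLeftKanExtensionOfIsLeftKanExtension X
    (𝟙 (ObjectProperty.ι (fun T : Finset S => T.card ≤ 1) ⋙ X))
  have hjTi : j ∉ insert i T := by
    simp only [Finset.mem_insert]
    rintro (h | h)
    exacts [hij h.symm, hj h]
  have hTjA3 : insert j T ≤ insert j (insert i T) := by
    intro a ha; simp only [Finset.mem_insert] at ha ⊢; tauto
  have h03 : T ≤ insert j (insert i T) :=
    le_trans (Finset.subset_insert i T) (Finset.subset_insert j _)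
  have sqw : X.map (homOfLE (Finset.subset_insert i T)) ≫
        X.map (homOfLE (Finset.subset_insert j (insert i T))) =
      X.map (homOfLE (Finset.subset_insert j T)) ≫ X.map (homOfLE hTjA3) := by
    rw [Xcomp _ _ h03, Xcomp _ _ h03]
  have app_eq : ∀ (Y : Finset S) (c : CostructuredArrow
      (ObjectProperty.ι (fun A : Finset S => A.card ≤ 1)) Y),
      ((Functor.LeftExtension.mk X
        (𝟙 (ObjectProperty.ι (fun A : Finset S => A.card ≤ 1) ⋙ X))).coconeAt Y).ι.app c
        = X.map c.hom := by
    intro Y c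
    simp
    exact Category.id_comp _
  refine IsPushout.of_isColimit' ⟨sqw⟩
    (PushoutCocone.IsColimit.mk sqw
      (fun s => (hpt _).desc (stmt4Cocone X T i j s)) ?_ ?_ ?_)
  · -- fac_left
    intro s
    apply (hpt (insert i T)).hom_ext
    intro c
    have hc3 : (ObjectProperty.ι (fun A : Finset S => A.card ≤ 1)).obj c.left ≤
        insert j (insert i T) := le_trans (leOfHom c.hom) (Finset.subset_insert j _)
    have hfac := (hpt (insert j (insert i T))).fac (stmt4Cocone X T i j s)
      (CostructuredArrow.mk (homOfLE hc3))
    rw [app_eq] at hfac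
    simp only [CostructuredArrow.mk_hom_eq_self, CostructuredArrow.mk_left,
      stmt4Cocone_ι_app] at hfac
    have hcj : j ∉ c.left.obj := fun hh => hjTi (leOfHom c.hom hh)
    rw [dif_neg hcj] at hfac
    rw [app_eq]
    erw [← Category.assoc, Xcomp _ _ hc3, hfac]
    exact congrArg (· ≫ s.inl) (mapeq _ _)
  · -- fac_right
    intro s
    apply (hpt (insert j T)).hom_ext
    intro c
    have hc3 : (ObjectProperty.ι (fun A : Finset S => A.card ≤ 1)).obj c.left ≤
        insert j (insert i T) := le_trans (leOfHom c.hom) hTjA3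
    have hfac := (hpt (insert j (insert i T))).fac (stmt4Cocone X T i j s)
      (CostructuredArrow.mk (homOfLE hc3))
    rw [app_eq] at hfac
    simp only [CostructuredArrow.mk_hom_eq_self, CostructuredArrow.mk_left,
      stmt4Cocone_ι_app] at hfac
    rw [app_eq]
    erw [← Category.assoc, Xcomp _ _ hc3, hfac]
    by_cases hcj : j ∈ c.left.obj
    · rw [dif_pos hcj]
      exact congrArg (· ≫ s.inr) (mapeq _ _)
    · rw [dif_neg hcj]
      have hBT : (ObjectProperty.ι (fun A : Finset S => A.card ≤ 1)).obj c.left ≤ T := by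
        intro a ha
        have ha' : a ∈ insert j T := leOfHom c.hom ha
        simp only [Finset.mem_insert] at ha'
        rcases ha' with h | h
        · exact absurd (h ▸ ha) hcj
        · exact h
      exact (stmt4_cond X T i j s hBT c.hom _).symm
  · -- uniq
    intro s m hml hmr
    show m = (hpt (insert j (insert i T))).desc (stmt4Cocone X T i j s)
    apply (hpt (insert j (insert i T))).hom_ext
    intro c
    have hfac := (hpt (insert j (insert i T))).fac (stmt4Cocone X T i j s) c
    rw [app_eq] at hfac
    rw [app_eq]
    erw [hfac]
    simp only [stmt4Cocone_ι_app]
    by_cases hcj : j ∈ c.left.obj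
    · have hcTj : (ObjectProperty.ι (fun A : Finset S => A.card ≤ 1)).obj c.left ≤
          insert j T := by
        intro a ha
        have : a = j := Finset.card_le_one.mp c.left.property a ha j hcj
        simp [this]
      have e1 : X.map c.hom = X.map (homOfLE hcTj) ≫ X.map (homOfLE hTjA3) :=
        ((Xcomp (homOfLE hcTj) (homOfLE hTjA3) (leOfHom c.hom)).trans (mapeq _ _)).symm
      rw [dif_pos hcj, e1]
      erw [Category.assoc, hmr]
      rfl
    · have hci : (ObjectProperty.ι (fun A : Finset S => A.card ≤ 1)).obj c.left ≤
          insert i T := by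
        intro a ha
        have h1 : a ∈ insert j (insert i T) := leOfHom c.hom ha
        simp only [Finset.mem_insert] at h1 ⊢
        rcases h1 with h | h
        · exact absurd (h ▸ ha) hcj
        · exact h
      have e1 : X.map c.hom =
          X.map (homOfLE hci) ≫ X.map (homOfLE (Finset.subset_insert j (insert i T))) :=
        ((Xcomp (homOfLE hci) (homOfLE (Finset.subset_insert j (insert i T)))
          (leOfHom c.hom)).trans (mapeq _ _)).symm
      rw [dif_neg hcj, e1]
      erw [Category.assoc, hml]
      rfl
end

section
/- Fix k ≥ 0. The functor from the poset of nonempty subsets of {0, 1, ..., k} (ordered by inclusion) to the full subcategory 𝚫_{≤k} of the simplex category spanned by the objects [0], ..., [k], sending a nonempty subset S ⊆ {0,...,k} to the linearly ordered set S (regarded as an object of 𝚫_{≤k} via its unique order-isomorphism with some [m], m ≤ k), and an inclusion S ⊆ T to the corresponding order-preserving injection, is an initial functor. -/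
open CategoryTheory Limits

/-- The poset of nonempty subsets of `{0, 1, ..., k}`. -/
abbrev NonemptySubsets (k : ℕ) := {S : Finset (Fin (k + 1)) // S.Nonempty}

/-- The functor from the poset of nonempty subsets of `{0, ..., k}` to the truncated
simplex category `𝚫_{≤ k}`, sending a nonempty subset `S` to the linearly ordered set `S`
(identified with `[|S| - 1]` via its unique order isomorphism) and an inclusion `S ⊆ T`
to the corresponding order-preserving injection. -/
noncomputable def subsetsToTruncated (k : ℕ) :
    NonemptySubsets k ⥤ SimplexCategory.Truncated k where
  obj S := ⟨SimplexCategory.mk (S.1.card - 1), by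
    have h1 := Finset.card_le_univ S.1
    simp only [Finset.card_univ, Fintype.card_fin] at h1
    simp only [SimplexCategory.len_mk]
    omega⟩
  map {S T} φ := ObjectProperty.homMk <| SimplexCategory.mkHom
    (((Fin.castOrderIso (Nat.succ_pred_eq_of_pos T.2.card_pos).symm).toOrderEmbedding.toOrderHom).comp
      (((T.1.orderIsoOfFin rfl).symm.toOrderEmbedding.toOrderHom).comp
        ((OrderHom.mk (fun x : {a // a ∈ S.1} => (⟨x.1, leOfHom φ x.2⟩ : {a // a ∈ T.1}))
            (fun _ _ h => h)).comp
          (((S.1.orderIsoOfFin rfl).toOrderEmbedding.toOrderHom).comp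
            ((Fin.castOrderIso (Nat.succ_pred_eq_of_pos S.2.card_pos)).toOrderEmbedding.toOrderHom)))))
  map_id := by
    intro S
    apply SimplexCategory.Truncated.Hom.ext
    rw [CategoryTheory.ObjectProperty.FullSubcategory.id_hom, SimplexCategory.id_toOrderHom]
    ext i
    simp [SimplexCategory.mkHom]
  map_comp := by
    intro S T U φ ψ
    apply SimplexCategory.Truncated.Hom.ext
    rw [CategoryTheory.ObjectProperty.FullSubcategory.comp_hom, SimplexCategory.comp_toOrderHom]
    ext i
    simp only [SimplexCategory.mkHom, SimplexCategory.Hom.toOrderHom_mk,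
      OrderHom.comp_coe, Function.comp_apply, OrderEmbedding.toOrderHom_coe,
      OrderIso.coe_toOrderEmbedding, OrderHom.coe_mk, Fin.castOrderIso_apply]
    simp [Fin.cast_cast, OrderIso.apply_symm_apply]
    rfl

namespace Stmt9Aux

variable {k : ℕ}

/-- Build a morphism `F.obj S ⟶ d` from an order hom `S →o Fin (d.len+1)`. -/
noncomputable def homOf (d : SimplexCategory.Truncated k) (S : NonemptySubsets k)
    (g : {a : Fin (k + 1) // a ∈ S.1} →o Fin (d.1.len + 1)) :
    (subsetsToTruncated k).obj S ⟶ d :=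
  ObjectProperty.homMk <| SimplexCategory.Hom.mk
    ⟨fun i => g (S.1.orderIsoOfFin rfl (Fin.cast (Nat.succ_pred_eq_of_pos S.2.card_pos) i)),
     fun a b h => g.mono ((S.1.orderIsoOfFin rfl).monotone (by exact h))⟩

/-- Recover the order hom from a morphism. -/
noncomputable def gOf (d : SimplexCategory.Truncated k) (S : NonemptySubsets k)
    (f : (subsetsToTruncated k).obj S ⟶ d) :
    {a : Fin (k + 1) // a ∈ S.1} →o Fin (d.1.len + 1) :=
  ⟨fun x => (SimplexCategory.Hom.toOrderHom f.hom)
      (Fin.cast (Nat.succ_pred_eq_of_pos S.2.card_pos).symm ((S.1.orderIsoOfFin rfl).symm x)),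
   fun a b h => (SimplexCategory.Hom.toOrderHom f.hom).mono
      (by exact (S.1.orderIsoOfFin rfl).symm.monotone h)⟩

lemma homOf_gOf (d : SimplexCategory.Truncated k) (S : NonemptySubsets k)
    (f : (subsetsToTruncated k).obj S ⟶ d) : homOf d S (gOf d S f) = f := by
  apply SimplexCategory.Truncated.Hom.ext
  ext i
  dsimp [homOf, gOf, ObjectProperty.homMk_hom]
  show ((SimplexCategory.Hom.toOrderHom f.hom) (Fin.cast (Nat.succ_pred_eq_of_pos S.2.card_pos).symm
    ((S.1.orderIsoOfFin rfl).symm (S.1.orderIsoOfFin rfl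
      (Fin.cast (Nat.succ_pred_eq_of_pos S.2.card_pos) i))))).1 = _
  rw [OrderIso.symm_apply_apply]
  congr 1

def incl (S T : NonemptySubsets k) (h : S.1 ⊆ T.1) :
    {a : Fin (k + 1) // a ∈ S.1} →o {a : Fin (k + 1) // a ∈ T.1} :=
  OrderHom.mk (fun x => ⟨x.1, h x.2⟩) (fun _ _ hh => hh)

noncomputable def restrict (d : SimplexCategory.Truncated k) (S T : NonemptySubsets k)
    (h : S.1 ⊆ T.1) (g : {a : Fin (k + 1) // a ∈ T.1} →o Fin (d.1.len + 1)) :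
    CostructuredArrow.mk (homOf d S (g.comp (incl S T h))) ⟶
      CostructuredArrow.mk (homOf d T g) :=
  CostructuredArrow.homMk (homOfLE h) (by
    apply SimplexCategory.Truncated.Hom.ext
    rw [CostructuredArrow.mk_hom_eq_self, CostructuredArrow.mk_hom_eq_self,
      CategoryTheory.ObjectProperty.FullSubcategory.comp_hom, SimplexCategory.comp_toOrderHom]
    ext i
    exact congrArg (fun t => (g t : Fin (d.1.len + 1)).1)
      ((T.1.orderIsoOfFin rfl).apply_symm_apply _))

lemma g_ext_singleton (d : SimplexCategory.Truncated k) (a : Fin (k + 1))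
    (g₁ g₂ : {x : Fin (k + 1) // x ∈ ({a} : Finset (Fin (k + 1)))} →o Fin (d.1.len + 1))
    (hval : g₁ ⟨a, Finset.mem_singleton_self a⟩ = g₂ ⟨a, Finset.mem_singleton_self a⟩) :
    g₁ = g₂ := by
  ext x
  obtain ⟨x, hx⟩ := x
  obtain rfl := Finset.mem_singleton.mp hx
  exact congrArg Fin.val hval

/-- The base object: the singleton `{0}` with constant map `0`. -/
noncomputable def base (d : SimplexCategory.Truncated k) :
    CostructuredArrow (subsetsToTruncated k) d :=
  CostructuredArrow.mk (homOf d ⟨{0}, Finset.singleton_nonempty 0⟩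
    ⟨fun _ => 0, monotone_const⟩)

lemma zig (d : SimplexCategory.Truncated k) (X : CostructuredArrow (subsetsToTruncated k) d) :
    Zigzag X (base d) := by
  set S := X.left with hS
  set g := gOf d S X.hom with hg
  have hX : X = CostructuredArrow.mk (homOf d S g) := by
    rw [hg, homOf_gOf]
    exact CostructuredArrow.eq_mk X
  -- data
  have hm : S.1.min' S.2 ∈ S.1 := S.1.min'_mem S.2
  set m := S.1.min' S.2 with hmdef
  have hsub : ({m} : Finset (Fin (k + 1))) ⊆ S.1 := Finset.singleton_subset_iff.mpr hm
  set sm : NonemptySubsets k := ⟨{m}, Finset.singleton_nonempty m⟩ with hsm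
  set v : Fin (d.1.len + 1) := g ⟨m, hm⟩ with hv
  set uS : NonemptySubsets k := ⟨Finset.univ, Finset.univ_nonempty⟩ with huS
  set cv : {x : Fin (k + 1) // x ∈ uS.1} →o Fin (d.1.len + 1) := ⟨fun _ => v, monotone_const⟩
    with hcv
  set sl : NonemptySubsets k := ⟨{Fin.last k}, Finset.singleton_nonempty _⟩ with hsl
  set s0 : NonemptySubsets k := ⟨{(0 : Fin (k + 1))}, Finset.singleton_nonempty _⟩ with hs0
  set h₂ : {x : Fin (k + 1) // x ∈ uS.1} →o Fin (d.1.len + 1) :=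
    ⟨fun x => if x.1 = Fin.last k then v else 0, by
      intro x y hxy
      dsimp only
      split_ifs with h1 h2
      · exact le_refl v
      · exact absurd (le_antisymm (Fin.le_last y.1) (h1 ▸ hxy)) h2
      · exact Fin.zero_le _
      · exact le_refl 0⟩ with hh2
  have e1 : g.comp (incl sm S hsub) = cv.comp (incl sm uS (Finset.subset_univ _)) := by
    apply g_ext_singleton
    rfl
  have e2 : cv.comp (incl sl uS (Finset.subset_univ _)) =
      h₂.comp (incl sl uS (Finset.subset_univ _)) := by
    apply g_ext_singleton
    show v = if Fin.last k = Fin.last k then v else 0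
    rw [if_pos rfl]
  have e3 : h₂.comp (incl s0 uS (Finset.subset_univ _)) =
      (⟨fun _ => 0, monotone_const⟩ : {x : Fin (k + 1) // x ∈ s0.1} →o Fin (d.1.len + 1)) := by
    apply g_ext_singleton
    show (if (0 : Fin (k + 1)) = Fin.last k then v else 0) = 0
    split_ifs with hif
    · have hk : k = 0 := by
        have := congrArg Fin.val hif
        simpa [Fin.last] using this.symm
      have hd := d.2
      apply Fin.ext
      have hvlt := v.isLt
      simp only [SimplexCategory.Truncated] at *
      omega
    · rfl
  rw [hX]
  refine Zigzag.trans (Zigzag.of_inv (restrict d sm S hsub g)) ?_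
  rw [e1]
  refine Zigzag.trans (Zigzag.of_hom (restrict d sm uS (Finset.subset_univ _) cv)) ?_
  refine Zigzag.trans (Zigzag.of_inv (restrict d sl uS (Finset.subset_univ _) cv)) ?_
  rw [e2]
  refine Zigzag.trans (Zigzag.of_hom (restrict d sl uS (Finset.subset_univ _) h₂)) ?_
  refine Zigzag.trans (Zigzag.of_inv (restrict d s0 uS (Finset.subset_univ _) h₂)) ?_
  rw [e3]
  exact Zigzag.refl _

end Stmt9Aux

/-- The functor sending a nonempty subset `S ⊆ {0, ..., k}` to the linearly ordered set `S`
is an initial functor into the truncated simplex category `𝚫_{≤ k}`. -/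
theorem stmt9 (k : ℕ) : (subsetsToTruncated k).Initial := by
  constructor
  intro d
  have : Nonempty (CostructuredArrow (subsetsToTruncated k) d) := ⟨Stmt9Aux.base d⟩
  exact zigzag_isConnected fun X Y => (Stmt9Aux.zig d X).trans (Stmt9Aux.zig d Y).symm
end

section
/- Let F : Type → Type be the analytic functor associated to a species A (a functor from the groupoid of finite sets and bijections to Type), given by F_A(X) = Σ_{n} (A(n) × X^n) / Σ_n, the colimit over the groupoid of finite sets of A(I) × X^I. Then for two species A and B with B(∅) empty, the analytic functor of the composition species (A ∘ B)(I) = Σ over partitions E of I of A(E) × Π_{J ∈ E} B(J) satisfies F_{A∘B} ≅ F_A ∘ F_B. -/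
universe u

open CategoryTheory

/-- A species: a functor from the groupoid of finite sets and bijections to types. -/
abbrev Species := Core FintypeCat.{u} ⥤ Type u

/-- The relation identifying `(a, v) ∈ A(n) × Xⁿ` with its translates under bijections.
Its quotient is the analytic functor `F_A(X) = Σ_n (A(n) × Xⁿ)/Σ_n`, i.e. the colimit
over the groupoid of finite sets of `A(I) × X^I` (computed on the skeleton). -/
def analyticRel (A : Species.{u}) (X : Type u)
    (p q : Σ n : ℕ, A.obj ⟨FintypeCat.of (ULift.{u} (Fin n))⟩ × (ULift.{u} (Fin n) → X)) :
    Prop :=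
  ∃ e : ULift.{u} (Fin p.1) ≃ ULift.{u} (Fin q.1),
    A.map ⟨FintypeCat.equivEquivIso e⟩ p.2.1 = q.2.1 ∧ p.2.2 = fun i => q.2.2 (e i)

/-- The analytic functor associated to a species. -/
def Fanalytic (A : Species.{u}) (X : Type u) : Type u :=
  Quot (analyticRel A X)

/-- The value of the composition species `(A ∘ B)(I) = Σ_{partitions E of I} A(E) × Π_{J ∈ E} B(J)`
on a finite set `I`; partitions of `I` are encoded as setoids (equivalence relations) on `I`,
with set of blocks the quotient `Quotient s` and blocks the fibers of `Quotient.mk s`. -/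
noncomputable def compObj (A B : Species.{u}) (I : FintypeCat.{u}) : Type u :=
  Σ s : Setoid I,
    A.obj ⟨@FintypeCat.of (Quotient s) inferInstance⟩ ×
      ∀ c : Quotient s,
        B.obj ⟨@FintypeCat.of {i : I // Quotient.mk s i = c} inferInstance⟩

/-- The relation on `Σ_n (A ∘ B)(n) × Xⁿ` identifying tuples under bijections of finite
sets (compatibly with the partition, the `A`-label on blocks and the `B`-labels). -/
noncomputable def compAnalyticRel (A B : Species.{u}) (X : Type u)
    (p q : Σ n : ℕ, compObj A B (FintypeCat.of (ULift.{u} (Fin n))) × (ULift.{u} (Fin n) → X)) :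
    Prop :=
  ∃ (e : ULift.{u} (Fin p.1) ≃ ULift.{u} (Fin q.1))
    (h : ∀ a b, p.2.1.1 a b ↔ q.2.1.1 (e a) (e b)),
    A.map ⟨FintypeCat.equivEquivIso (Quotient.congr e h)⟩ p.2.1.2.1 = q.2.1.2.1 ∧
    (∀ c, B.map ⟨FintypeCat.equivEquivIso (Equiv.subtypeEquiv e (fun i =>
        ⟨fun hp => by subst hp; rfl,
         fun hq => (Quotient.congr e h).injective hq⟩))⟩
        (p.2.1.2.2 c) = q.2.1.2.2 (Quotient.congr e h c)) ∧
    p.2.2 = fun i => q.2.2 (e i)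

/-- The analytic functor of the composition species `A ∘ B`. -/
noncomputable def FanalyticComp (A B : Species.{u}) (X : Type u) : Type u :=
  Quot (compAnalyticRel A B X)

/-! ### Auxiliary definitions -/

abbrev Fn (n : ℕ) : Type u := ULift.{u} (Fin n)

def amap (A : Species.{u}) {X Y : FintypeCat.{u}} (e : X ≃ Y) : A.obj ⟨X⟩ → A.obj ⟨Y⟩ :=
  A.map ⟨FintypeCat.equivEquivIso e⟩

lemma amap_refl (A : Species.{u}) {X : FintypeCat.{u}} (a : A.obj ⟨X⟩) :
    amap A (Equiv.refl X) a = a := by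
  have h1 : FintypeCat.equivEquivIso (Equiv.refl X) = Iso.refl X := Iso.ext rfl
  rw [amap, h1]
  exact FunctorToTypes.map_id_apply A (X := (⟨X⟩ : Core FintypeCat.{u})) a

lemma amap_amap (A : Species.{u}) {X Y Z : FintypeCat.{u}} (e : X ≃ Y) (f : Y ≃ Z)
    (a : A.obj ⟨X⟩) : amap A f (amap A e a) = amap A (e.trans f) a := by
  have h1 : FintypeCat.equivEquivIso (e.trans f)
      = FintypeCat.equivEquivIso e ≪≫ FintypeCat.equivEquivIso f := Iso.ext rfl
  rw [amap, amap, amap, h1]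
  exact (FunctorToTypes.map_comp_apply A (X := (⟨X⟩ : Core FintypeCat.{u}))
    (Y := (⟨Y⟩ : Core FintypeCat.{u})) (Z := (⟨Z⟩ : Core FintypeCat.{u}))
    ⟨FintypeCat.equivEquivIso e⟩ ⟨FintypeCat.equivEquivIso f⟩ a).symm

lemma amap_symm_apply (A : Species.{u}) {X Y : FintypeCat.{u}} (e : X ≃ Y) (a : A.obj ⟨X⟩) :
    amap A e.symm (amap A e a) = a := by
  rw [amap_amap, Equiv.self_trans_symm, amap_refl]

lemma amap_eq_iff (A : Species.{u}) {X Y : FintypeCat.{u}} (e : X ≃ Y) (a : A.obj ⟨X⟩)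
    (a' : A.obj ⟨Y⟩) : amap A e a = a' ↔ a = amap A e.symm a' := by
  constructor
  · rintro rfl; rw [amap_symm_apply]
  · rintro rfl; rw [amap_amap, Equiv.symm_trans_self, amap_refl]

lemma amap_congr (A : Species.{u}) {X Y : FintypeCat.{u}} {e f : X ≃ Y} (h : ∀ i, e i = f i)
    (a : A.obj ⟨X⟩) : amap A e a = amap A f a := by
  congr 1; exact Equiv.ext h

lemma analyticRel_equivalence (A : Species.{u}) (X : Type u) :
    Equivalence (analyticRel A X) where
  refl p := ⟨Equiv.refl _, amap_refl A _, rfl⟩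
  symm {p q} := fun ⟨e, h1, h2⟩ =>
    ⟨e.symm, by
      show amap A (X := FintypeCat.of (Fn q.1)) (Y := FintypeCat.of (Fn p.1)) e.symm q.2.1
        = p.2.1
      rw [← h1]
      exact amap_symm_apply A (X := FintypeCat.of (Fn p.1)) (Y := FintypeCat.of (Fn q.1)) e
        p.2.1, by funext i; rw [h2]; simp⟩
  trans {p q r} := fun ⟨e, h1, h2⟩ ⟨f, g1, g2⟩ =>
    ⟨e.trans f, by
      show amap A (X := FintypeCat.of (Fn p.1)) (Y := FintypeCat.of (Fn r.1)) (e.trans f) p.2.1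
        = r.2.1
      refine ((amap_amap A (X := FintypeCat.of (Fn p.1)) (Y := FintypeCat.of (Fn q.1))
        (Z := FintypeCat.of (Fn r.1)) e f p.2.1).symm).trans ?_
      rw [show amap A (X := FintypeCat.of (Fn p.1)) (Y := FintypeCat.of (Fn q.1)) e p.2.1
        = q.2.1 from h1]
      exact g1, by rw [h2, g2]; rfl⟩

lemma rel_of_mk_eq {B : Species.{u}} {X : Type u} {p q}
    (h : Quot.mk (analyticRel B X) p = Quot.mk (analyticRel B X) q) : analyticRel B X p q :=
  ((analyticRel_equivalence B X).eqvGen_iff).mp (Quot.eq.mp h)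

noncomputable def rep (B : Species.{u}) (X : Type u) (t : Fanalytic B X) :
    Σ n : ℕ, B.obj ⟨FintypeCat.of (Fn n)⟩ × (Fn n → X) :=
  (Quot.exists_rep t).choose

lemma rep_spec (B : Species.{u}) (X : Type u) (t : Fanalytic B X) :
    Quot.mk _ (rep B X t) = t :=
  (Quot.exists_rep t).choose_spec

noncomputable def toFn (α : Type u) [Finite α] : α ≃ Fn (Nat.card α) :=
  (Finite.equivFin α).trans Equiv.ulift.symm

def sigmaFst {α : Type u} {β : α → Type u} (a : α) : {x : Σ i, β i // x.1 = a} ≃ β a where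
  toFun x := x.2 ▸ x.1.2
  invFun b := ⟨⟨a, b⟩, rfl⟩
  left_inv := by rintro ⟨⟨i, b⟩, rfl⟩; rfl
  right_inv b := rfl

lemma fnNonempty {B : Species.{u}} (hB : IsEmpty (B.obj ⟨FintypeCat.of PEmpty.{u + 1}⟩))
    {k : ℕ} (b : B.obj ⟨FintypeCat.of (Fn k)⟩) : Nonempty (Fn k) := by
  cases k with
  | zero => exact (hB.false (amap B (Equiv.equivPEmpty (Fn 0)) b)).elim
  | succ k => exact ⟨⟨0, k.succ_pos⟩⟩

/-! ### The forward map -/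

noncomputable def blockElt (B : Species.{u}) (X : Type u) {n : ℕ} (s : Setoid (Fn n))
    (b : ∀ c : Quotient s,
      B.obj ⟨@FintypeCat.of {i : Fn n // Quotient.mk s i = c} inferInstance⟩)
    (x : Fn n → X) (c : Quotient s) : Fanalytic B X :=
  Quot.mk _ ⟨Nat.card {i : Fn n // Quotient.mk s i = c},
    amap B (toFn {i : Fn n // Quotient.mk s i = c}) (b c),
    fun u => x ((toFn {i : Fn n // Quotient.mk s i = c}).symm u).1⟩

noncomputable def Phi0 (A B : Species.{u}) (X : Type u)
    (p : Σ n : ℕ, compObj A B (FintypeCat.of (Fn n)) × (Fn n → X)) :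
    Σ m : ℕ, A.obj ⟨FintypeCat.of (Fn m)⟩ × (Fn m → Fanalytic B X) :=
  ⟨Nat.card (Quotient p.2.1.1),
   amap A (toFn (Quotient p.2.1.1)) p.2.1.2.1,
   fun j => blockElt B X p.2.1.1 p.2.1.2.2 p.2.2 ((toFn (Quotient p.2.1.1)).symm j)⟩

/-! ### The backward map -/

section Psi

variable {m : ℕ} (ν : Fn.{u} m → ℕ)

abbrev sg : Type u := Σ j : Fn.{u} m, Fn.{u} (ν j)

noncomputable def bigG : sg ν ≃ Fn (Nat.card (sg ν)) := toFn _

noncomputable def phi (i : Fn (Nat.card (sg ν))) : Fn m := ((bigG ν).symm i).1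

lemma phi_surj (hν : ∀ j, Nonempty (Fn.{u} (ν j))) : Function.Surjective (phi ν) := fun j =>
  ⟨bigG ν ⟨j, (hν j).some⟩, by simp [phi]⟩

variable (hν : ∀ j, Nonempty (Fn.{u} (ν j)))

noncomputable def qe : Quotient (Setoid.ker (phi ν)) ≃ Fn m :=
  Setoid.quotientKerEquivOfSurjective _ (phi_surj ν hν)

lemma qe_mk (i : Fn (Nat.card (sg ν))) :
    qe ν hν (Quotient.mk _ i) = phi ν i := rfl

lemma mem_fiber_iff (c' : Quotient (Setoid.ker (phi ν))) (i : Fn (Nat.card (sg ν))) :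
    Quotient.mk (Setoid.ker (phi ν)) i = c' ↔ ((bigG ν).symm i).1 = qe ν hν c' := by
  constructor
  · rintro rfl; rfl
  · intro h
    exact (qe ν hν).injective ((qe_mk ν hν i).trans h)

noncomputable def fullEquiv (c' : Quotient (Setoid.ker (phi ν))) :
    {i : Fn (Nat.card (sg ν)) // Quotient.mk (Setoid.ker (phi ν)) i = c'} ≃ Fn (ν (qe ν hν c')) :=
  (Equiv.subtypeEquiv (bigG ν).symm (mem_fiber_iff ν hν c')).trans (sigmaFst (qe ν hν c'))

end Psi

noncomputable def Psi0 (A B : Species.{u}) (X : Type u)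
    (hB : IsEmpty (B.obj ⟨FintypeCat.of PEmpty.{u + 1}⟩))
    (t : Σ m : ℕ, A.obj ⟨FintypeCat.of (Fn m)⟩ × (Fn m → Fanalytic B X)) :
    Σ n : ℕ, compObj A B (FintypeCat.of (Fn n)) × (Fn n → X) :=
  let ν : Fn t.1 → ℕ := fun j => (rep B X (t.2.2 j)).1
  let hν : ∀ j, Nonempty (Fn.{u} (ν j)) := fun j => fnNonempty hB (rep B X (t.2.2 j)).2.1
  ⟨Nat.card (sg ν),
   ⟨Setoid.ker (phi ν),
    amap A (qe ν hν).symm t.2.1,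
    fun c' => amap B (fullEquiv ν hν c').symm ((rep B X (t.2.2 (qe ν hν c'))).2.1)⟩,
   fun i => (rep B X (t.2.2 (((bigG ν).symm i).1))).2.2 (((bigG ν).symm i).2)⟩

/-! ### Lemma 1: Phi0 is sound -/

lemma amap_conj (Aa : Species.{u}) {P R : FintypeCat.{u}} (F : ↥P ≃ ↥R) (c : Aa.obj ⟨P⟩) :
    amap Aa (Y := FintypeCat.of (Fn (Nat.card ↥R)))
      ((toFn ↥P).symm.trans (F.trans (toFn ↥R)))
      (amap Aa (Y := FintypeCat.of (Fn (Nat.card ↥P))) (toFn ↥P) c)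
    = amap Aa (Y := FintypeCat.of (Fn (Nat.card ↥R))) (toFn ↥R) (amap Aa F c) := by
  rw [amap_amap, amap_amap]
  congr 1
  rw [← Equiv.trans_assoc, Equiv.self_trans_symm, Equiv.refl_trans]

lemma blockElt_eq {B : Species.{u}} {X : Type u} {n n' : ℕ} {s : Setoid (Fn.{u} n)}
    {s' : Setoid (Fn.{u} n')} (e : Fn.{u} n ≃ Fn.{u} n')
    (hs : ∀ i₁ i₂, s i₁ i₂ ↔ s' (e i₁) (e i₂))
    {b : ∀ c : _root_.Quotient s,
      B.obj ⟨@FintypeCat.of {i : Fn n // Quotient.mk s i = c} inferInstance⟩}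
    {b' : ∀ c : _root_.Quotient s',
      B.obj ⟨@FintypeCat.of {i : Fn n' // Quotient.mk s' i = c} inferInstance⟩}
    {x : Fn n → X} {x' : Fn n' → X}
    (hb : ∀ c, B.map ⟨FintypeCat.equivEquivIso (Equiv.subtypeEquiv e (fun i =>
        ⟨fun hp => by subst hp; rfl,
         fun hq => (Quotient.congr e hs).injective hq⟩))⟩
        (b c) = b' (Quotient.congr e hs c))
    (hx : x = fun i => x' (e i)) (c : _root_.Quotient s) :
    blockElt B X s b x c = blockElt B X s' b' x' (Quotient.congr e hs c) := by
  apply Quot.sound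
  refine ⟨(toFn {i : Fn n // Quotient.mk s i = c}).symm.trans
    ((Equiv.subtypeEquiv e (fun i =>
        ⟨fun hp => by subst hp; rfl,
         fun hq => (Quotient.congr e hs).injective hq⟩)).trans
      (toFn {i : Fn n' // Quotient.mk s' i = (Quotient.congr e hs c)})), ?_, ?_⟩
  · show amap B (X := FintypeCat.of (Fn (Nat.card {i : Fn n // Quotient.mk s i = c}))) (Y := FintypeCat.of (Fn (Nat.card {i : Fn n' // Quotient.mk s' i = Quotient.congr e hs c}))) _ (amap B (X := @FintypeCat.of {i : Fn n // Quotient.mk s i = c} inferInstance) (toFn _) (b c)) = amap B (X := @FintypeCat.of {i : Fn n' // Quotient.mk s' i = Quotient.congr e hs c} inferInstance) (toFn _) (b' (Quotient.congr e hs c))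
    have h1 := (amap_conj B (P := @FintypeCat.of {i : Fn n // Quotient.mk s i = c} inferInstance)
      (R := @FintypeCat.of {i : Fn n' // Quotient.mk s' i = Quotient.congr e hs c}
        inferInstance) (Equiv.subtypeEquiv e (fun i =>
        ⟨fun hp => by subst hp; rfl,
         fun hq => (Quotient.congr e hs).injective hq⟩)) (b c))
    rw [← hb c]
    exact h1
  · funext u
    show x _ = x' _
    rw [hx]
    simp only [Equiv.trans_apply, Equiv.symm_apply_apply, Equiv.subtypeEquiv_apply]

lemma phi_sound (A B : Species.{u}) (X : Type u)
    {p q : Σ n : ℕ, compObj A B (FintypeCat.of (Fn.{u} n)) × (Fn.{u} n → X)}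
    (hpq : compAnalyticRel A B X p q) :
    analyticRel A (Fanalytic B X) (Phi0 A B X p) (Phi0 A B X q) := by
  obtain ⟨n, ⟨s, a, b⟩, x⟩ := p
  obtain ⟨n', ⟨s', a', b'⟩, x'⟩ := q
  obtain ⟨e, hs, hA, hb, hx⟩ := hpq
  refine ⟨(toFn (_root_.Quotient s)).symm.trans
    ((Quotient.congr e hs).trans (toFn (_root_.Quotient s'))), ?_, ?_⟩
  · exact (amap_conj A (P := @FintypeCat.of (_root_.Quotient s) inferInstance)
      (R := @FintypeCat.of (_root_.Quotient s') inferInstance)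
      (Quotient.congr e hs) a).trans (congrArg _ (show amap A
        (X := @FintypeCat.of (_root_.Quotient s) inferInstance)
        (Y := @FintypeCat.of (_root_.Quotient s') inferInstance)
        (Quotient.congr e hs) a = a' from hA))
  · funext j
    show blockElt B X s b x ((toFn (_root_.Quotient s)).symm j)
      = blockElt B X s' b' x' ((toFn (_root_.Quotient s')).symm _)
    rw [blockElt_eq e hs hb hx ((toFn (_root_.Quotient s)).symm j)]
    congr 1
    exact (Equiv.symm_apply_apply _ _).symm

/-! ### Lemma 4: Phi0 ∘ Psi0 is the identity up to the relation -/

lemma sigmaFst_eval {α : Type u} {β : α → Type u} {γ : Sort*} (ξ : ∀ a, β a → γ) (a : α)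
    (x : {x : Σ i, β i // x.1 = a}) : ξ a (sigmaFst a x) = ξ x.1.1 x.1.2 := by
  rcases x with ⟨⟨i, b⟩, h⟩; subst h; rfl

lemma fullEquiv_eval {m : ℕ} (ν : Fn.{u} m → ℕ) (hν : ∀ j, Nonempty (Fn.{u} (ν j)))
    {γ : Sort*} (ξ : ∀ j, Fn.{u} (ν j) → γ)
    (c' : _root_.Quotient (Setoid.ker (phi ν)))
    (v : {i : Fn.{u} (Nat.card (sg ν)) // Quotient.mk (Setoid.ker (phi ν)) i = c'}) :
    ξ (qe ν hν c') (fullEquiv ν hν c' v)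
      = ξ (((bigG ν).symm v.1).1) (((bigG ν).symm v.1).2) :=
  sigmaFst_eval ξ (qe ν hν c') ⟨(bigG ν).symm v.1, (mem_fiber_iff ν hν c' v.1).mp v.2⟩

lemma phi_psi (A B : Species.{u}) (X : Type u)
    (hB : IsEmpty (B.obj ⟨FintypeCat.of PEmpty.{u + 1}⟩))
    (t : Σ m : ℕ, A.obj ⟨FintypeCat.of (Fn.{u} m)⟩ × (Fn.{u} m → Fanalytic B X)) :
    analyticRel A (Fanalytic B X) (Phi0 A B X (Psi0 A B X hB t)) t := by
  obtain ⟨m, a, f⟩ := t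
  set ν : Fn.{u} m → ℕ := fun j => (rep B X (f j)).1 with hνdef
  have hν : ∀ j, Nonempty (Fn.{u} (ν j)) := fun j => fnNonempty hB (rep B X (f j)).2.1
  set S : Setoid (Fn.{u} (Nat.card (sg ν))) := Setoid.ker (phi ν) with hSdef
  refine ⟨(toFn (_root_.Quotient S)).symm.trans (qe ν hν), ?_, ?_⟩
  · show amap A (X := FintypeCat.of (Fn (Nat.card (_root_.Quotient S))))
      (Y := FintypeCat.of (Fn m)) ((toFn (_root_.Quotient S)).symm.trans (qe ν hν))
      (amap A (X := @FintypeCat.of (_root_.Quotient S) inferInstance)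
        (toFn (_root_.Quotient S))
        (amap A (X := FintypeCat.of (Fn m))
          (Y := @FintypeCat.of (_root_.Quotient S) inferInstance) (qe ν hν).symm a)) = a
    rw [amap_amap, amap_amap]
    have h1 : (qe ν hν).symm.trans ((toFn (_root_.Quotient S)).trans
        ((toFn (_root_.Quotient S)).symm.trans (qe ν hν))) = Equiv.refl _ := by
      apply Equiv.ext; intro z
      simp only [Equiv.trans_apply, Equiv.symm_apply_apply, Equiv.apply_symm_apply,
        Equiv.refl_apply]
    rw [h1]
    exact amap_refl A a
  · funext j
    show blockElt B X S _ _ ((toFn (_root_.Quotient S)).symm j) = f ((qe ν hν) _)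
    generalize (toFn (_root_.Quotient S)).symm j = c'
    rw [← rep_spec B X (f (qe ν hν c'))]
    apply Quot.sound
    refine ⟨(toFn {i : Fn (Nat.card (sg ν)) // Quotient.mk S i = c'}).symm.trans
      (fullEquiv ν hν c'), ?_, ?_⟩
    · show amap B (X := FintypeCat.of (Fn (Nat.card {i : Fn (Nat.card (sg ν)) //
          Quotient.mk S i = c'})))
        (Y := FintypeCat.of (Fn (ν (qe ν hν c'))))
        ((toFn {i : Fn (Nat.card (sg ν)) // Quotient.mk S i = c'}).symm.trans
          (fullEquiv ν hν c'))
        (amap B (X := @FintypeCat.of {i : Fn (Nat.card (sg ν)) // Quotient.mk S i = c'}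
            inferInstance)
          (toFn {i : Fn (Nat.card (sg ν)) // Quotient.mk S i = c'})
          (amap B (X := FintypeCat.of (Fn (ν (qe ν hν c'))))
            (Y := @FintypeCat.of {i : Fn (Nat.card (sg ν)) // Quotient.mk S i = c'}
              inferInstance)
            (fullEquiv ν hν c').symm ((rep B X (f (qe ν hν c'))).2.1)))
        = (rep B X (f (qe ν hν c'))).2.1
      rw [amap_amap, amap_amap]
      have h1 : (fullEquiv ν hν c').symm.trans
          ((toFn {i : Fn (Nat.card (sg ν)) // Quotient.mk S i = c'}).trans
          ((toFn {i : Fn (Nat.card (sg ν)) // Quotient.mk S i = c'}).symm.trans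
            (fullEquiv ν hν c'))) = Equiv.refl _ := by
        apply Equiv.ext; intro z
        simp only [Equiv.trans_apply, Equiv.symm_apply_apply, Equiv.apply_symm_apply,
          Equiv.refl_apply]
      rw [h1]
      exact amap_refl B _
    · funext u
      show (rep B X (f (phi ν ((toFn {i : Fn (Nat.card (sg ν)) //
          Quotient.mk S i = c'}).symm u).1))).2.2
          (((bigG ν).symm ((toFn {i : Fn (Nat.card (sg ν)) //
            Quotient.mk S i = c'}).symm u).1).2)
        = (rep B X (f (qe ν hν c'))).2.2 ((fullEquiv ν hν c')
            ((toFn {i : Fn (Nat.card (sg ν)) // Quotient.mk S i = c'}).symm u))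
      exact (fullEquiv_eval ν hν (fun j u => (rep B X (f j)).2.2 u) c' _).symm

/-! ### Lemma 2: Psi0 is sound -/

lemma amap_family_cast (Bs : Species.{u}) {ι : Type u} (κ : ι → ℕ)
    (β : ∀ j, Bs.obj ⟨FintypeCat.of (Fn.{u} (κ j))⟩) {j₁ j₂ : ι} (hj : j₁ = j₂)
    (C : Fn.{u} (κ j₁) ≃ Fn.{u} (κ j₂)) (hC : ∀ u, ((C u).down : ℕ) = (u.down : ℕ)) :
    amap Bs C (β j₁) = β j₂ := by
  subst hj
  have h1 : C = Equiv.refl _ := Equiv.ext fun u => ULift.down_injective (Fin.ext (hC u))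
  rw [h1]; exact amap_refl Bs _

noncomputable def castFn {k₁ k₂ : ℕ} (h : k₁ = k₂) : Fn.{u} k₁ ≃ Fn.{u} k₂ :=
  Equiv.ulift.trans ((finCongr h).trans Equiv.ulift.symm)

lemma castFn_down {k₁ k₂ : ℕ} (h : k₁ = k₂) (u : Fn.{u} k₁) :
    ((castFn h u).down : ℕ) = (u.down : ℕ) := rfl

lemma sigma_mk_cast {m' : ℕ} (ν' : Fn.{u} m' → ℕ) {j₁ j₂ : Fn.{u} m'} (h : j₁ = j₂)
    (u : Fn.{u} (ν' j₁)) :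
    (⟨j₁, u⟩ : sg ν') = ⟨j₂, castFn (congrArg ν' h) u⟩ := by
  subst h; rfl

lemma fullEquiv_symm_val {m : ℕ} (ν : Fn.{u} m → ℕ) (hν : ∀ j, Nonempty (Fn.{u} (ν j)))
    (c' : _root_.Quotient (Setoid.ker (phi ν))) (u : Fn.{u} (ν (qe ν hν c'))) :
    (((fullEquiv ν hν c').symm u) : Fn.{u} (Nat.card (sg ν)))
      = bigG ν ⟨qe ν hν c', u⟩ := rfl

lemma psi_sound (A B : Species.{u}) (X : Type u)
    (hB : IsEmpty (B.obj ⟨FintypeCat.of PEmpty.{u + 1}⟩))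
    {t t' : Σ m : ℕ, A.obj ⟨FintypeCat.of (Fn.{u} m)⟩ × (Fn.{u} m → Fanalytic B X)}
    (h : analyticRel A (Fanalytic B X) t t') :
    compAnalyticRel A B X (Psi0 A B X hB t) (Psi0 A B X hB t') := by
  obtain ⟨m, a, f⟩ := t
  obtain ⟨m', a', f'⟩ := t'
  obtain ⟨e, hA, hf⟩ := h
  simp only at hf hA
  rw [hf]
  set ν' : Fn.{u} m' → ℕ := fun j => (rep B X (f' j)).1 with hν'def
  have hν' : ∀ j, Nonempty (Fn.{u} (ν' j)) := fun j => fnNonempty hB (rep B X (f' j)).2.1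
  set ν : Fn.{u} m → ℕ := fun j => (rep B X (f' (e j))).1 with hνdef
  have hν : ∀ j, Nonempty (Fn.{u} (ν j)) := fun j => fnNonempty hB (rep B X (f' (e j))).2.1
  set ES : (Σ j : Fn.{u} m, Fn.{u} (ν' (e j))) ≃ sg ν' :=
    Equiv.sigmaCongrLeft (β := fun j' => Fn.{u} (ν' j')) e with hESdef
  set E : Fn.{u} (Nat.card (sg ν)) ≃ Fn.{u} (Nat.card (sg ν')) :=
    (bigG ν).symm.trans (ES.trans (bigG ν')) with hEdef
  have hES1 : ∀ z : sg ν, (ES z).1 = e z.1 := by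
    rintro ⟨j, u⟩
    simp [hESdef]
  have hES2 : ∀ (j : Fn.{u} m) (u : Fn.{u} (ν j)),
      ES ⟨j, u⟩ = ⟨e j, u⟩ := by
    intro j u
    simp [hESdef]
  have hEapp : ∀ z : sg ν, E ((bigG ν) z) = (bigG ν') (ES z) := by
    intro z
    rw [hEdef]
    simp only [Equiv.trans_apply, Equiv.symm_apply_apply]
  have key0 : ∀ i, phi ν' (E i) = e (phi ν i) := by
    intro i
    show ((bigG ν').symm (E i)).1 = e ((bigG ν).symm i).1
    rw [hEdef]
    simp only [Equiv.trans_apply, Equiv.symm_apply_apply]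
    exact hES1 _
  have h_e : ∀ i₁ i₂, (Setoid.ker (phi ν)) i₁ i₂ ↔ (Setoid.ker (phi ν')) (E i₁) (E i₂) := by
    intro i₁ i₂
    show phi ν i₁ = phi ν i₂ ↔ phi ν' (E i₁) = phi ν' (E i₂)
    rw [key0, key0]
    exact ⟨fun hh => by rw [hh], fun hh => e.injective hh⟩
  have key1 : ∀ y, Quotient.congr E h_e y = (qe ν' hν').symm (e (qe ν hν y)) := by
    intro y
    induction y using Quotient.ind with
    | _ i =>
      rw [Quotient.congr_mk]
      apply (qe ν' hν').injective
      rw [Equiv.apply_symm_apply]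
      exact key0 i
  refine ⟨E, h_e, ?_, ?_, ?_⟩
  · show amap A (X := @FintypeCat.of (_root_.Quotient (Setoid.ker (phi ν))) inferInstance)
      (Y := @FintypeCat.of (_root_.Quotient (Setoid.ker (phi ν'))) inferInstance)
      (Quotient.congr E h_e)
      (amap A (X := FintypeCat.of (Fn m)) (qe ν hν).symm a)
      = amap A (X := FintypeCat.of (Fn m')) (qe ν' hν').symm a'
    have hA2 : amap A (X := FintypeCat.of (Fn.{u} m)) (Y := FintypeCat.of (Fn.{u} m')) e a
        = a' := hA
    rw [amap_amap, ← hA2, amap_amap]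
    congr 1
    apply Equiv.ext
    intro z
    show (Quotient.congr E h_e) ((qe ν hν).symm z) = _
    refine (key1 ((qe ν hν).symm z)).trans ?_
    rw [Equiv.apply_symm_apply]
    rfl
  · rintro (c' : _root_.Quotient (Setoid.ker (phi ν)))
    show amap B
        (X := @FintypeCat.of {i : Fn (Nat.card (sg ν)) //
          Quotient.mk (Setoid.ker (phi ν)) i = c'} inferInstance)
        (Y := @FintypeCat.of {i : Fn (Nat.card (sg ν')) //
          Quotient.mk (Setoid.ker (phi ν')) i = Quotient.congr E h_e c'} inferInstance)
        (Equiv.subtypeEquiv E (fun i =>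
          ⟨fun hp => by subst hp; rfl,
           fun hq => (Quotient.congr E h_e).injective hq⟩))
        (amap B (X := FintypeCat.of (Fn (ν (qe ν hν c'))))
          (fullEquiv ν hν c').symm ((rep B X (f' (e (qe ν hν c')))).2.1))
      = amap B (X := FintypeCat.of (Fn (ν' (qe ν' hν' (Quotient.congr E h_e c')))))
          (fullEquiv ν' hν' (Quotient.congr E h_e c')).symm
          ((rep B X (f' (qe ν' hν' (Quotient.congr E h_e c')))).2.1)
    have hd : qe ν' hν' (Quotient.congr E h_e c') = e (qe ν hν c') := by
      rw [key1, Equiv.apply_symm_apply]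
    have hcast : amap B (castFn (congrArg ν' hd.symm))
        ((rep B X (f' (e (qe ν hν c')))).2.1)
        = (rep B X (f' (qe ν' hν' (Quotient.congr E h_e c')))).2.1 :=
      amap_family_cast B (fun j' => (rep B X (f' j')).1)
        (fun j' => (rep B X (f' j')).2.1) hd.symm _ (fun u => rfl)
    rw [← hcast, amap_amap, amap_amap]
    congr 1
    apply Equiv.ext
    intro u
    apply Subtype.ext
    rw [Equiv.trans_apply, Equiv.trans_apply]
    show (E (((fullEquiv ν hν c').symm u) : Fn.{u} (Nat.card (sg ν))))
      = (((fullEquiv ν' hν' (Quotient.congr E h_e c')).symm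
          (castFn (congrArg ν' hd.symm) u)) : Fn.{u} (Nat.card (sg ν')))
    rw [fullEquiv_symm_val, fullEquiv_symm_val, hEapp, hES2]
    exact congrArg (bigG ν') (sigma_mk_cast ν' hd.symm u)
  · funext i
    show (rep B X (f' (e (((bigG ν).symm i).1)))).2.2 (((bigG ν).symm i).2)
      = (rep B X (f' (((bigG ν').symm (E i)).1))).2.2 (((bigG ν').symm (E i)).2)
    have hE : (bigG ν').symm (E i) = ES ((bigG ν).symm i) := by
      rw [hEdef]; exact (bigG ν').symm_apply_apply _
    rw [hE]
    rcases hGi : (bigG ν).symm i with ⟨j, u⟩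
    rw [hES2]

/-! ### Lemma 3: Psi0 ∘ Phi0 is the identity up to the relation -/

lemma amap_fiber_cast (Bs : Species.{u}) {n : ℕ} (s : Setoid (Fn.{u} n))
    (b : ∀ c : _root_.Quotient s,
      Bs.obj ⟨@FintypeCat.of {i : Fn.{u} n // Quotient.mk s i = c} inferInstance⟩)
    {c₁ c₂ : _root_.Quotient s} (h : c₁ = c₂)
    (C : {i : Fn.{u} n // Quotient.mk s i = c₁} ≃ {i : Fn.{u} n // Quotient.mk s i = c₂})
    (hC : ∀ v, (C v).1 = v.1) :
    amap Bs C (b c₁) = b c₂ := by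
  subst h
  have h1 : C = Equiv.refl _ := Equiv.ext fun v => Subtype.ext (hC v)
  rw [h1]; exact amap_refl Bs _

set_option maxHeartbeats 2000000 in
lemma psi_phi (A B : Species.{u}) (X : Type u)
    (hB : IsEmpty (B.obj ⟨FintypeCat.of PEmpty.{u + 1}⟩))
    (p : Σ n : ℕ, compObj A B (FintypeCat.of (Fn.{u} n)) × (Fn.{u} n → X)) :
    compAnalyticRel A B X (Psi0 A B X hB (Phi0 A B X p)) p := by
  obtain ⟨n, ⟨s, a, b⟩, x⟩ := p
  set g : _root_.Quotient s ≃ Fn.{u} (Nat.card (_root_.Quotient s)) :=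
    toFn (_root_.Quotient s) with hgdef
  set f : Fn.{u} (Nat.card (_root_.Quotient s)) → Fanalytic B X :=
    fun j => blockElt B X s b x (g.symm j) with hfdef
  set ν : Fn.{u} (Nat.card (_root_.Quotient s)) → ℕ := fun j => (rep B X (f j)).1 with hνdef
  have hν : ∀ j, Nonempty (Fn.{u} (ν j)) := fun j => fnNonempty hB (rep B X (f j)).2.1
  have hrel : ∀ j, analyticRel B X (rep B X (f j))
      ⟨Nat.card {i : Fn.{u} n // Quotient.mk s i = g.symm j},
        amap B (toFn {i : Fn.{u} n // Quotient.mk s i = g.symm j}) (b (g.symm j)),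
        fun u => x (((toFn {i : Fn.{u} n // Quotient.mk s i = g.symm j}).symm u)).1⟩ :=
    fun j => rel_of_mk_eq (rep_spec B X (f j))
  choose d hd1 hd2 using hrel
  set chain : sg ν ≃ Fn.{u} n :=
    (Equiv.sigmaCongrRight d).trans
      ((Equiv.sigmaCongrRight (fun j => (toFn {i : Fn.{u} n // Quotient.mk s i = g.symm j}).symm)).trans
        ((Equiv.sigmaCongrLeft (β := fun c => {i : Fn.{u} n // Quotient.mk s i = c}) g.symm).trans
          (Equiv.sigmaFiberEquiv (fun i : Fn.{u} n => Quotient.mk s i)))) with hchaindef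
  set e : Fn.{u} (Nat.card (sg ν)) ≃ Fn.{u} n := (bigG ν).symm.trans chain with hedef
  have hchain : ∀ (j) (u : Fn.{u} (ν j)),
      chain ⟨j, u⟩ = (((toFn {i : Fn.{u} n // Quotient.mk s i = g.symm j}).symm (d j u))).1 := by
    intro j u
    rw [hchaindef]
    simp only [Equiv.trans_apply, Equiv.sigmaCongrRight_apply, Equiv.sigmaCongrLeft_apply,
      Equiv.sigmaFiberEquiv]
    rfl
  have hmkchain : ∀ z : sg ν, Quotient.mk s (chain z) = g.symm z.1 := by
    rintro ⟨j, u⟩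
    rw [hchain]
    exact ((toFn {i : Fn.{u} n // Quotient.mk s i = g.symm j}).symm (d j u)).2
  have he_app : ∀ i, e i = chain ((bigG ν).symm i) := fun i => rfl
  have hmk : ∀ i, Quotient.mk s (e i) = g.symm (phi ν i) := fun i => hmkchain ((bigG ν).symm i)
  have h_e : ∀ i₁ i₂, (Setoid.ker (phi ν)) i₁ i₂ ↔ s (e i₁) (e i₂) := by
    intro i₁ i₂
    show phi ν i₁ = phi ν i₂ ↔ s (e i₁) (e i₂)
    constructor
    · intro hh
      exact Quotient.exact ((hmk i₁).trans (by rw [hh, ← hmk i₂]))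
    · intro hh
      apply g.symm.injective
      rw [← hmk i₁, ← hmk i₂]
      exact Quotient.sound hh
  have key1 : ∀ y, Quotient.congr e h_e y = g.symm (qe ν hν y) := by
    intro y
    induction y using Quotient.ind with
    | _ i =>
      rw [Quotient.congr_mk]
      exact hmk i
  refine ⟨e, h_e, ?_, ?_, ?_⟩
  · show amap A
      (X := @FintypeCat.of (_root_.Quotient (Setoid.ker (phi ν))) inferInstance)
      (Y := @FintypeCat.of (_root_.Quotient s) inferInstance)
      (Quotient.congr e h_e)
      (amap A (X := FintypeCat.of (Fn (Nat.card (_root_.Quotient s)))) (qe ν hν).symm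
        (amap A (X := @FintypeCat.of (_root_.Quotient s) inferInstance) g a)) = a
    rw [amap_amap, amap_amap]
    have h1 : g.trans ((qe ν hν).symm.trans (Quotient.congr e h_e)) = Equiv.refl _ := by
      apply Equiv.ext
      intro c
      rw [Equiv.trans_apply, Equiv.trans_apply, key1, Equiv.apply_symm_apply,
        Equiv.symm_apply_apply, Equiv.refl_apply]
    rw [h1]
    exact amap_refl A a
  · rintro (c' : _root_.Quotient (Setoid.ker (phi ν)))
    show amap B
      (X := @FintypeCat.of {i : Fn.{u} (Nat.card (sg ν)) //
        Quotient.mk (Setoid.ker (phi ν)) i = c'} inferInstance)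
      (Y := @FintypeCat.of {i : Fn.{u} n //
        Quotient.mk s i = Quotient.congr e h_e c'} inferInstance)
      (Equiv.subtypeEquiv e (fun i =>
        ⟨fun hp => by subst hp; rfl,
         fun hq => (Quotient.congr e h_e).injective hq⟩))
      (amap B (X := FintypeCat.of (Fn (ν (qe ν hν c'))))
        (fullEquiv ν hν c').symm ((rep B X (f (qe ν hν c'))).2.1))
      = b (Quotient.congr e h_e c')
    have hd1' : amap B (X := FintypeCat.of (Fn (ν (qe ν hν c'))))
        (Y := FintypeCat.of (Fn (Nat.card
          {i : Fn.{u} n // Quotient.mk s i = g.symm (qe ν hν c')})))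
        (d (qe ν hν c')) ((rep B X (f (qe ν hν c'))).2.1)
        = amap B (toFn {i : Fn.{u} n // Quotient.mk s i = g.symm (qe ν hν c')})
            (b (g.symm (qe ν hν c'))) := hd1 (qe ν hν c')
    have hβ : (rep B X (f (qe ν hν c'))).2.1
        = amap B
            (X := FintypeCat.of (Fn (Nat.card
              {i : Fn.{u} n // Quotient.mk s i = g.symm (qe ν hν c')})))
            (Y := FintypeCat.of (Fn (ν (qe ν hν c'))))
            (d (qe ν hν c')).symm
            (amap B
              (X := @FintypeCat.of {i : Fn.{u} n // Quotient.mk s i = g.symm (qe ν hν c')}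
                inferInstance)
              (toFn {i : Fn.{u} n // Quotient.mk s i = g.symm (qe ν hν c')})
              (b (g.symm (qe ν hν c')))) :=
      (amap_symm_apply B (X := FintypeCat.of (Fn (ν (qe ν hν c'))))
        (Y := FintypeCat.of (Fn (Nat.card
          {i : Fn.{u} n // Quotient.mk s i = g.symm (qe ν hν c')})))
        (d (qe ν hν c')) _).symm.trans
      (congrArg (amap B
        (X := FintypeCat.of (Fn (Nat.card
          {i : Fn.{u} n // Quotient.mk s i = g.symm (qe ν hν c')})))
        (Y := FintypeCat.of (Fn (ν (qe ν hν c'))))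
        (d (qe ν hν c')).symm) hd1')
    rw [hβ, amap_amap, amap_amap, amap_amap]
    refine amap_fiber_cast B s b (key1 c').symm _ ?_
    intro v
    show e (((fullEquiv ν hν c').symm ((d (qe ν hν c')).symm
        ((toFn {i : Fn.{u} n // Quotient.mk s i = g.symm (qe ν hν c')}) v))).val) = v.val
    rw [fullEquiv_symm_val, he_app, Equiv.symm_apply_apply, hchain]
    rw [Equiv.apply_symm_apply, Equiv.symm_apply_apply]
  · funext i
    show (rep B X (f (((bigG ν).symm i).1))).2.2 (((bigG ν).symm i).2)
      = x (chain ((bigG ν).symm i))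
    generalize (bigG ν).symm i = z
    rcases z with ⟨j, u⟩
    rw [hd2 j, hchain]

/-- Joyal's theorem: if `B(∅)` is empty, the analytic functor of the composition species
`A ∘ B` is the composite of the analytic functors of `A` and `B`. -/
theorem stmt12 (A B : Species.{u})
    (hB : IsEmpty (B.obj ⟨FintypeCat.of PEmpty.{u + 1}⟩)) (X : Type u) :
    Nonempty (FanalyticComp A B X ≃ Fanalytic A (Fanalytic B X)) := by
  refine ⟨{
    toFun := Quot.lift (fun p => Quot.mk _ (Phi0 A B X p))
      (fun p q h => Quot.sound (phi_sound A B X h)),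
    invFun := Quot.lift (fun t => Quot.mk _ (Psi0 A B X hB t))
      (fun t t' h => Quot.sound (psi_sound A B X hB h)),
    left_inv := by
      intro z
      induction z using Quot.ind with
      | _ p => exact Quot.sound (psi_phi A B X hB p),
    right_inv := by
      intro z
      induction z using Quot.ind with
      | _ t => exact Quot.sound (phi_psi A B X hB t) }⟩
end

section
/- Let C be a category with finite coproducts and let Sym^×(C) denote the free symmetric (strict up to coherence) monoidal category on C, whose objects are finite sequences of objects of C. Let p : Sym^×(C) → C be the functor sending a sequence (x_1, ..., x_n) to the coproduct x_1 ⊔ ... ⊔ x_n. Then for every object x of C, the functor from the groupoid of finite sets and bijections Fin^≅ to the comma category Sym^×(C)_{/x}, sending a finite set I to the pair consisting of the constant sequence (x)_{i∈I} together with the fold map ⊔_{i∈I} x → x, is a final functor. -/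
universe v u

open CategoryTheory Limits

/-- The free symmetric monoidal category on a category `C`: objects are finite sequences
of objects of `C`, and morphisms are a bijection of the index sets together with morphisms
between corresponding components. -/
def SymCat (C : Type u) [Category.{v} C] : Type u := Σ n : ℕ, Fin n → C

instance SymCat.category (C : Type u) [Category.{v} C] : Category.{max v u} (SymCat C) where
  Hom x y := Σ σ : Fin x.1 ≃ Fin y.1, ∀ i, ULift.{u} (x.2 i ⟶ y.2 (σ i))
  id x := ⟨Equiv.refl _, fun i => ⟨𝟙 (x.2 i)⟩⟩
  comp {x y z} f g := ⟨f.1.trans g.1, fun i => ⟨(f.2 i).down ≫ (g.2 (f.1 i)).down⟩⟩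
  id_comp := by
    rintro ⟨n, x⟩ ⟨m, y⟩ ⟨σ, f⟩
    exact Sigma.ext rfl (heq_of_eq (funext fun i => congrArg ULift.up
      (Category.id_comp (f i).down)))
  comp_id := by
    rintro ⟨n, x⟩ ⟨m, y⟩ ⟨σ, f⟩
    exact Sigma.ext rfl (heq_of_eq (funext fun i => congrArg ULift.up
      (Category.comp_id (f i).down)))
  assoc := by
    rintro w x y z ⟨σ, f⟩ ⟨τ, g⟩ ⟨ρ, h⟩
    exact Sigma.ext rfl (heq_of_eq (funext fun i => congrArg ULift.up
      (Category.assoc (f i).down (g (σ i)).down (h (τ (σ i))).down)))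

variable {C : Type u} [Category.{v} C] [HasFiniteCoproducts C]

/-- The canonical functor `p : Sym^×(C) ⥤ C` taking a finite sequence of objects to its
coproduct. -/
noncomputable def symFold : SymCat C ⥤ C where
  obj x := ∐ x.2
  map {x y} f := Sigma.desc fun i => (f.2 i).down ≫ Sigma.ι y.2 (f.1 i)
  map_id := by
    rintro ⟨n, x⟩
    ext i
    simp [SymCat.category]
    exact Category.id_comp _
  map_comp := by
    rintro x y z f g
    ext i
    simp [SymCat.category]
    exact Category.assoc _ _ _

attribute [local instance] FintypeCat.fintype

/-- The underlying finite type of an object of the groupoid of finite sets. -/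
abbrev coreTy (I : Core FintypeCat.{u}) : Type u := ((Core.inclusion FintypeCat).obj I : Type u)

/-- The equivalence of underlying types induced by a bijection in the groupoid of
finite sets. -/
def coreEquiv {I J : Core FintypeCat.{u}} (e : I ⟶ J) : coreTy I ≃ coreTy J :=
  FintypeCat.equivEquivIso.symm
    (show (Core.inclusion FintypeCat).obj I ≅ (Core.inclusion FintypeCat).obj J from e.iso)

/-- The constant sequence `(x)_{i ∈ I}` equipped with the fold map, as an object of the
comma category `Sym^×(C)_{/x}`. -/
noncomputable def foldObj (x : C) (I : Core FintypeCat.{u}) :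
    CostructuredArrow (symFold (C := C)) x :=
  { left := (⟨Fintype.card (coreTy I), fun _ => x⟩ : SymCat C)
    right := ⟨⟨⟩⟩
    hom := Limits.Sigma.desc fun _ => 𝟙 x }

/-- The morphism of comma objects induced by a bijection of finite sets. -/
noncomputable def foldMap (x : C) {I J : Core FintypeCat.{u}} (e : I ⟶ J) :
    foldObj (C := C) x I ⟶ foldObj (C := C) x J :=
  CostructuredArrow.homMk
    (⟨(Fintype.equivFin (coreTy I)).symm.trans ((coreEquiv e).trans
        (Fintype.equivFin (coreTy J))), fun _ => ⟨𝟙 x⟩⟩)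
    (by
      dsimp only [foldObj, symFold]
      ext i
      simp
      exact (Sigma.ι_desc _ _).trans (Sigma.ι_desc (fun _ => 𝟙 x) i).symm)

/-- The functor from the groupoid of finite sets and bijections to `Sym^×(C)_{/x}`,
sending a finite set `I` to the constant sequence `(x)_{i ∈ I}` equipped with the fold map
`⊔_{i ∈ I} x ⟶ x`. -/
noncomputable def foldDiagram (x : C) :
    Core FintypeCat.{u} ⥤ CostructuredArrow (symFold (C := C)) x where
  obj I := foldObj x I
  map {I J} e := foldMap x e
  map_id := by
    intro I
    apply CostructuredArrow.hom_ext
    refine Sigma.ext ?_ HEq.rfl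
    show Equiv.trans _ _ = Equiv.refl _
    have h : coreEquiv (𝟙 I) = Equiv.refl (coreTy I) := by
      ext a
      rfl
    rw [h]
    ext a
    simp
    exact congrArg Fin.val ((Fintype.equivFin _).apply_symm_apply a)
  map_comp := by
    intro I J K e e'
    apply CostructuredArrow.hom_ext
    refine Sigma.ext ?_ (heq_of_eq (funext fun i => congrArg ULift.up
      (Category.id_comp (𝟙 x)).symm))
    show Equiv.trans _ _ = Equiv.trans _ _
    have h : coreEquiv (e ≫ e') = (coreEquiv e).trans (coreEquiv e') := by
      ext a
      rfl
    rw [h]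
    ext a
    simp [foldMap]
    exact congrArg (fun y => ((Fintype.equivFin _) (coreEquiv e' y) : ℕ))
      ((Fintype.equivFin _).symm_apply_apply _).symm

/-- The component maps of any morphism into a fold object are determined. -/
lemma foldObj_hom_component {x : C} {d : CostructuredArrow (symFold (C := C)) x}
    {I : Core FintypeCat.{u}} (f : d ⟶ foldObj (C := C) x I) (i : Fin d.left.1) :
    (f.left.2 i).down = Sigma.ι d.left.2 i ≫ d.hom := by
  have w := CostructuredArrow.w f
  have h2 := congrArg (fun g => Sigma.ι d.left.2 i ≫ g) w
  dsimp [symFold, foldObj] at h2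
  replace h2 : Sigma.ι d.left.2 i ≫ (Sigma.desc fun i => (f.left.2 i).down ≫
      Sigma.ι (fun _ => x) (f.left.1 i)) ≫
      Sigma.desc (fun _ => 𝟙 x) = Sigma.ι d.left.2 i ≫ d.hom := h2
  rw [Sigma.ι_desc_assoc] at h2
  exact (Category.comp_id _).symm.trans ((congrArg (fun g => (f.left.2 i).down ≫ g)
    (Sigma.ι_desc (fun _ => 𝟙 x) (f.left.1 i)).symm).trans ((Category.assoc _ _ _).symm.trans h2))

/-- The base point of the comma category, used for nonemptiness. -/
noncomputable def foldBase {x : C} (d : CostructuredArrow (symFold (C := C)) x) :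
    d ⟶ foldObj (C := C) x ⟨FintypeCat.of (ULift.{u} (Fin d.left.1))⟩ :=
  CostructuredArrow.homMk
    ⟨Equiv.ulift.{u}.symm.trans
      (Fintype.equivFin (coreTy ⟨FintypeCat.of (ULift.{u} (Fin d.left.1))⟩)), fun i => ⟨Sigma.ι d.left.2 i ≫ d.hom⟩⟩
    (by dsimp only [foldObj, symFold]; ext i
        show Sigma.ι d.left.2 i ≫ (Sigma.desc fun i => (Sigma.ι d.left.2 i ≫ d.hom) ≫ Sigma.ι (fun _ => x) _) ≫ Sigma.desc (fun _ => 𝟙 x) = _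
        simp only [Sigma.ι_desc_assoc, Category.assoc]
        rw [Sigma.ι_desc, Category.comp_id])

/-- The functor `Fin^≅ ⥤ Sym^×(C)_{/x}`, `I ↦ ((x)_{i ∈ I}, fold)`, is final. -/
theorem stmt13 (x : C) : (foldDiagram (C := C) x).Final := by
  constructor
  intro d
  -- Nonempty
  have hne : Nonempty (StructuredArrow d (foldDiagram (C := C) x)) :=
    ⟨StructuredArrow.mk (T := foldDiagram (C := C) x) (foldBase d)⟩
  have := hne
  apply zigzag_isConnected
  intro j₁ j₂
  -- build a direct morphism j₁ ⟶ j₂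
  set σ₁ := j₁.hom.left.1 with hσ₁
  set σ₂ := j₂.hom.left.1 with hσ₂
  let e : j₁.right ⟶ j₂.right :=
    ⟨FintypeCat.equivEquivIso ((Fintype.equivFin (coreTy j₁.right)).trans
      ((σ₁.symm.trans σ₂).trans (Fintype.equivFin (coreTy j₂.right)).symm))⟩
  refine Relation.ReflTransGen.single (Or.inl ⟨StructuredArrow.homMk e ?_⟩)
  apply CostructuredArrow.hom_ext
  show (j₁.hom ≫ (foldDiagram (C := C) x).map e).left = j₂.hom.left
  refine Sigma.ext ?_ (heq_of_eq (funext fun i => congrArg ULift.up ?_))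
  · show σ₁.trans _ = σ₂
    refine Equiv.ext fun a => ?_
    show (Fintype.equivFin (coreTy j₂.right))
        (((Fintype.equivFin (coreTy j₁.right)).trans
          ((σ₁.symm.trans σ₂).trans (Fintype.equivFin (coreTy j₂.right)).symm))
          ((Fintype.equivFin (coreTy j₁.right)).symm (σ₁ a))) = σ₂ a
    exact (Equiv.apply_symm_apply _ _).trans (congrArg _
      ((congrArg _ (Equiv.apply_symm_apply _ _)).trans (Equiv.symm_apply_apply σ₁ a)))
  · show ((j₁.hom ≫ (foldDiagram (C := C) x).map e).left.2 i).down = (j₂.hom.left.2 i).down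
    have h1 : ((j₁.hom ≫ (foldDiagram (C := C) x).map e).left.2 i).down =
        (j₁.hom.left.2 i).down ≫ 𝟙 x := rfl
    rw [h1, foldObj_hom_component j₁.hom i, foldObj_hom_component j₂.hom i]
    exact Category.comp_id _
end

section
/- Let C be a category admitting pushouts and a terminal object, D a category admitting pullbacks, and n ≥ 0. If a functor F : C → D sends every strongly cocartesian (n+1)-cube in C to a cartesian (n+1)-cube in D, then F sends every strongly cocartesian (n+2)-cube in C to a cartesian (n+2)-cube in D. That is, every n-excisive functor is (n+1)-excisive. -/
open CategoryTheory Limits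

/-- A cube `X : P(S) ⥤ C` is strongly cocartesian if it is left Kan extended from the
subposet of subsets of cardinality at most 1. -/
def IsStronglyCocartesianCube {S : Type} [Fintype S] [DecidableEq S]
    {C : Type*} [Category C] (X : Finset S ⥤ C) : Prop :=
  X.IsLeftKanExtension
    (𝟙 (ObjectProperty.ι (fun T : Finset S => T.card ≤ 1) ⋙ X))

/-- A cube `X : P(S) ⥤ D` is cartesian if it exhibits `X(∅)` as the limit of its
restriction to the nonempty subsets of `S`. -/
def IsCartesianCube {S : Type} [Fintype S] [DecidableEq S]
    {D : Type*} [Category D] (X : Finset S ⥤ D) : Prop :=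
  Nonempty (IsLimit (Cone.mk (X.obj ∅)
    { app := fun T => X.map (homOfLE (Finset.empty_subset T.obj))
      naturality := by
        intro T T' f
        dsimp
        rw [Category.id_comp, ← X.map_comp]
        rfl } :
    Cone (ObjectProperty.ι (fun T : Finset S => T.Nonempty) ⋙ X)))


namespace Stmt14Aux

open CategoryTheory.Functor

set_option linter.unusedSectionVars false
set_option maxHeartbeats 1000000

universe v₁ v₂

variable {σ : Type} [DecidableEq σ] {C : Type*} [Category.{v₁} C]

lemma fmap_congr (X : Finset σ ⥤ C) {a b : Finset σ} (f g : a ⟶ b) : X.map f = X.map g := by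
  congr 1; exact Subsingleton.elim f g

lemma map_comp_eq (X : Finset σ ⥤ C) {a b c : Finset σ} (f : a ⟶ b) (g : b ⟶ c) (h : a ≤ c) :
    X.map f ≫ X.map g = X.map (homOfLE h) := by
  rw [← X.map_comp]; exact fmap_congr X _ _

lemma map_eq_id (X : Finset σ ⥤ C) {a : Finset σ} (f : a ⟶ a) : X.map f = 𝟙 (X.obj a) := by
  rw [fmap_congr X f (𝟙 a), X.map_id]

lemma map_self (X : Finset σ ⥤ C) {a b : Finset σ} (f : a ⟶ b) (g : b ⟶ a) :
    X.map f ≫ X.map g = 𝟙 (X.obj a) := by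
  have hab : a = b := le_antisymm (leOfHom f) (leOfHom g)
  subst hab
  rw [map_comp_eq X f g le_rfl, map_eq_id]

/-- The wide-pushout style universal property of a cube at a subset `T`. -/
def cubeUP (X : Finset σ ⥤ C) (T : Finset σ) : Prop :=
  ∀ {W : C} (g₀ : X.obj ∅ ⟶ W) (g : ∀ u, u ∈ T → (X.obj {u} ⟶ W)),
    (∀ u (hu : u ∈ T), X.map (homOfLE (Finset.empty_subset _)) ≫ g u hu = g₀) →
    ∃! m : X.obj T ⟶ W, X.map (homOfLE (Finset.empty_subset _)) ≫ m = g₀ ∧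
      ∀ u (hu : u ∈ T), X.map (homOfLE (Finset.singleton_subset_iff.mpr hu)) ≫ m = g u hu

lemma cubeUP.homext {X : Finset σ ⥤ C} {T : Finset σ} (H : cubeUP X T) {W : C}
    (m m' : X.obj T ⟶ W)
    (h0 : X.map (homOfLE (Finset.empty_subset _)) ≫ m
        = X.map (homOfLE (Finset.empty_subset _)) ≫ m')
    (hs : ∀ u (hu : u ∈ T), X.map (homOfLE (Finset.singleton_subset_iff.mpr hu)) ≫ m
        = X.map (homOfLE (Finset.singleton_subset_iff.mpr hu)) ≫ m') :
    m = m' := by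
  obtain ⟨mm, _, huniq⟩ := H (X.map (homOfLE (Finset.empty_subset _)) ≫ m)
    (fun u hu => X.map (homOfLE (Finset.singleton_subset_iff.mpr hu)) ≫ m)
    (fun u hu => by rw [← Category.assoc, map_comp_eq X _ _ (Finset.empty_subset _)])
  have h1 : m = mm := huniq m ⟨rfl, fun u hu => rfl⟩
  have h2 : m' = mm := huniq m' ⟨h0.symm, fun u hu => (hs u hu).symm⟩
  rw [h1, h2]

abbrev incl1 (σ : Type) [DecidableEq σ] :=
  ObjectProperty.ι (fun T : Finset σ => T.card ≤ 1)

lemma exists_sing {U : Finset σ} (hU : U.card ≤ 1) (h : U ≠ ∅) : ∃ a, U = {a} :=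
  Finset.card_eq_one.mp (le_antisymm hU (Finset.card_pos.mpr (Finset.nonempty_of_ne_empty h)))

/-- the object `∅` of the costructured arrow category -/
def obj0 (T : Finset σ) : CostructuredArrow (incl1 σ) T :=
  ⟨⟨∅, by simp⟩, ⟨⟨⟩⟩, homOfLE (Finset.empty_subset T)⟩

/-- the object `{u}` of the costructured arrow category -/
def objS {T : Finset σ} (u : σ) (hu : u ∈ T) : CostructuredArrow (incl1 σ) T :=
  ⟨⟨{u}, by simp⟩, ⟨⟨⟩⟩, homOfLE (Finset.singleton_subset_iff.mpr hu)⟩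

variable {X : Finset σ ⥤ C} {T : Finset σ}

section Glue

variable {W : C} (g₀ : X.obj ∅ ⟶ W) (g : ∀ u, u ∈ T → (X.obj {u} ⟶ W))

lemma cast_g {a b : σ} (h : a = b) (ha : a ∈ T) (hb : b ∈ T)
    {U : Finset σ} (h1 : U ≤ {a}) (h2 : U ≤ {b}) :
    X.map (homOfLE h1) ≫ g a ha = X.map (homOfLE h2) ≫ g b hb := by subst h; rfl

noncomputable def glueApp (U : Finset σ) (hU : U.card ≤ 1) (hsub : U ⊆ T) : X.obj U ⟶ W :=
  dite (U = ∅) (fun h => X.map (homOfLE h.le) ≫ g₀)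
    (fun h => X.map (homOfLE (exists_sing hU h).choose_spec.le) ≫
      g (exists_sing hU h).choose
        (hsub (Finset.eq_singleton_iff_unique_mem.mp (exists_sing hU h).choose_spec).1))

lemma glueApp_empty (hU : (∅ : Finset σ).card ≤ 1) (hsub : ∅ ⊆ T) :
    glueApp g₀ g ∅ hU hsub = g₀ := by
  rw [glueApp, dif_pos rfl, map_eq_id, Category.id_comp]

lemma glueApp_sing (u : σ) (hu : u ∈ T) (hU : ({u} : Finset σ).card ≤ 1)
    (hsub : ({u} : Finset σ) ⊆ T) :
    glueApp g₀ g {u} hU hsub = g u hu := by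
  have hne : ({u} : Finset σ) ≠ ∅ := Finset.singleton_ne_empty u
  rw [glueApp, dif_neg hne]
  have := cast_g g (Finset.singleton_injective (exists_sing hU hne).choose_spec.symm)
    ((hsub (Finset.eq_singleton_iff_unique_mem.mp (exists_sing hU hne).choose_spec).1)) hu
    (exists_sing hU hne).choose_spec.le le_rfl
  rw [this, map_eq_id, Category.id_comp]

variable (hcomp : ∀ u (hu : u ∈ T), X.map (homOfLE (Finset.empty_subset _)) ≫ g u hu = g₀)

noncomputable def glueCocone :
    Cocone (CostructuredArrow.proj (incl1 σ) T ⋙ incl1 σ ⋙ X) where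
  pt := W
  ι :=
    { app := fun c => glueApp g₀ g c.left.obj c.left.property (leOfHom c.hom)
      naturality := by
        rintro ⟨⟨U, hU⟩, ⟨⟨⟩⟩, f⟩ ⟨⟨U', hU'⟩, ⟨⟨⟩⟩, f'⟩ ⟨⟨φl⟩, φr, hφ⟩
        show X.map (homOfLE (leOfHom φl)) ≫ glueApp g₀ g U' hU' (leOfHom f') =
          glueApp g₀ g U hU (leOfHom f) ≫ 𝟙 W
        rw [Category.comp_id]
        by_cases h : U = ∅
        · subst h
          rw [glueApp_empty]
          by_cases h' : U' = ∅
          · subst h'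
            rw [glueApp_empty, map_eq_id, Category.id_comp]
          · obtain ⟨u, hu⟩ := exists_sing hU' h'
            subst hu
            have huT : u ∈ T := Finset.singleton_subset_iff.mp (leOfHom f')
            rw [glueApp_sing g₀ g u huT, fmap_congr X _ (homOfLE (Finset.empty_subset {u})),
              hcomp]
        · obtain ⟨u, hu⟩ := exists_sing hU h
          subst hu
          have hu' : u ∈ U' := leOfHom φl (Finset.mem_singleton_self u)
          have h' : U' = {u} := le_antisymm
            (fun x hx => Finset.mem_singleton.mpr (Finset.card_le_one.mp hU' x hx u hu'))
            (Finset.singleton_subset_iff.mpr hu')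
          subst h'
          have huT : u ∈ T := Finset.singleton_subset_iff.mp (leOfHom f)
          rw [map_eq_id, Category.id_comp, glueApp_sing g₀ g u huT] }

end Glue

lemma cubeUP_of_isColimit
    (hc : IsColimit ((LeftExtension.mk X (𝟙 (incl1 σ ⋙ X))).coconeAt T)) : cubeUP X T := by
  intro W g₀ g hcomp
  refine ⟨hc.desc (glueCocone g₀ g hcomp), ⟨?_, ?_⟩, ?_⟩
  · have hf := hc.fac (glueCocone g₀ g hcomp) (obj0 T)
    change (𝟙 _ ≫ X.map (homOfLE (Finset.empty_subset T))) ≫ hc.desc (glueCocone g₀ g hcomp) =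
      glueApp g₀ g ∅ (by simp) (Finset.empty_subset T) at hf
    rw [Category.id_comp] at hf
    exact hf.trans (glueApp_empty _ _ _ _)
  · intro u hu
    have hf := hc.fac (glueCocone g₀ g hcomp) (objS u hu)
    change (𝟙 _ ≫ X.map (homOfLE (Finset.singleton_subset_iff.mpr hu))) ≫
      hc.desc (glueCocone g₀ g hcomp) =
      glueApp g₀ g {u} (by simp) (Finset.singleton_subset_iff.mpr hu) at hf
    rw [Category.id_comp] at hf
    exact hf.trans (glueApp_sing g₀ g u hu _ _)
  · intro m hm
    apply hc.hom_ext
    rintro ⟨⟨U, hU⟩, ⟨⟨⟩⟩, f⟩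
    have hfac := hc.fac (glueCocone g₀ g hcomp) ⟨⟨U, hU⟩, ⟨⟨⟩⟩, f⟩
    refine Eq.trans ?_ hfac.symm
    change (𝟙 _ ≫ X.map f) ≫ m = glueApp g₀ g U hU (leOfHom f)
    rw [Category.id_comp]
    by_cases h : U = ∅
    · subst h
      rw [glueApp_empty, fmap_congr X f (homOfLE (Finset.empty_subset T)), hm.1]
    · obtain ⟨u, hu⟩ := exists_sing hU h
      subst hu
      have huT : u ∈ T := Finset.singleton_subset_iff.mp (leOfHom f)
      rw [glueApp_sing g₀ g u huT, fmap_congr X f (homOfLE (Finset.singleton_subset_iff.mpr huT)),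
        hm.2 u huT]

noncomputable def isColimit_of_cubeUP (H : cubeUP X T) :
    IsColimit ((LeftExtension.mk X (𝟙 (incl1 σ ⋙ X))).coconeAt T) := by
  have key : ∀ (sc : Cocone (CostructuredArrow.proj (incl1 σ) T ⋙ incl1 σ ⋙ X)),
      ∀ u (hu : u ∈ T), X.map (homOfLE (Finset.empty_subset _)) ≫ sc.ι.app (objS u hu)
        = sc.ι.app (obj0 T) := by
    intro sc u hu
    have hw := sc.w (show obj0 T ⟶ objS u hu from
      CostructuredArrow.homMk (show (⟨∅, by simp⟩ : ObjectProperty.FullSubcategory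
        (fun T : Finset σ => T.card ≤ 1)) ⟶ ⟨{u}, by simp⟩ from
        ⟨homOfLE (Finset.empty_subset _)⟩) (Subsingleton.elim _ _))
    rw [← hw]
    rfl
  exact
    { desc := fun sc => (H (sc.ι.app (obj0 T)) (fun u hu => sc.ι.app (objS u hu))
        (key sc)).choose
      fac := fun sc => by
        rintro ⟨⟨U, hU⟩, ⟨⟨⟩⟩, f⟩
        obtain ⟨h1, h2⟩ := (H (sc.ι.app (obj0 T)) (fun u hu => sc.ι.app (objS u hu))
          (key sc)).choose_spec.1
        show (𝟙 _ ≫ X.map f) ≫ _ = _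
        rw [Category.id_comp]
        by_cases h : U = ∅
        · subst h
          rw [fmap_congr X f (homOfLE (Finset.empty_subset T)), h1]
          rfl
        · obtain ⟨u, hu⟩ := exists_sing hU h
          subst hu
          have huT : u ∈ T := Finset.singleton_subset_iff.mp (leOfHom f)
          rw [fmap_congr X f (homOfLE (Finset.singleton_subset_iff.mpr huT)), h2 u huT]
          rfl
      uniq := fun sc m hm => by
        refine ExistsUnique.unique (H (sc.ι.app (obj0 T)) (fun u hu => sc.ι.app (objS u hu))
          (key sc)) ⟨?_, ?_⟩
          ((H (sc.ι.app (obj0 T)) (fun u hu => sc.ι.app (objS u hu)) (key sc)).choose_spec.1)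
        · have := hm (obj0 T)
          change (𝟙 _ ≫ X.map (homOfLE (Finset.empty_subset T))) ≫ m = sc.ι.app (obj0 T) at this
          rw [Category.id_comp] at this
          rw [fmap_congr X (homOfLE _) (homOfLE (Finset.empty_subset T) :
            (∅ : Finset σ) ⟶ T)] at this
          exact this
        · intro u hu
          have := hm (objS u hu)
          change (𝟙 _ ≫ X.map (homOfLE (Finset.singleton_subset_iff.mpr hu))) ≫ m =
            sc.ι.app (objS u hu) at this
          rw [Category.id_comp] at this
          rw [fmap_congr X (homOfLE _) (homOfLE (Finset.singleton_subset_iff.mpr hu) :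
            ({u} : Finset σ) ⟶ T)] at this
          exact this }


section Existence

variable [HasPushouts C]

instance {P : Finset σ → Prop} (a b : ObjectProperty.FullSubcategory P) : Subsingleton (a ⟶ b) :=
  ⟨fun _ _ => InducedCategory.hom_ext (Subsingleton.elim _ _)⟩

/-- `∅` is terminal in the costructured arrow category over `∅`. -/
noncomputable def obj0Terminal : IsTerminal (obj0 (∅ : Finset σ)) := by
  apply IsTerminal.ofUniqueHom (fun c => CostructuredArrow.homMk
    (show c.left ⟶ (⟨∅, by simp⟩ : ObjectProperty.FullSubcategory (fun T : Finset σ => T.card ≤ 1)) from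
      ⟨homOfLE (show c.left.obj ≤ ∅ from leOfHom c.hom)⟩) (Subsingleton.elim _ _))
  intro c m
  apply CostructuredArrow.hom_ext
  exact Subsingleton.elim _ _

/-- the diagram of which `X T` should be the colimit -/
abbrev cubeDiagram (X : Finset σ ⥤ C) (T : Finset σ) :
    CostructuredArrow (incl1 σ) T ⥤ C :=
  CostructuredArrow.proj (incl1 σ) T ⋙ incl1 σ ⋙ X

section Step

variable (X : Finset σ ⥤ C) (T : Finset σ) (a : σ)
  [HasColimit (cubeDiagram X T)]

/-- extend an object over `T` to one over `insert a T` -/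
def extObj (c : CostructuredArrow (incl1 σ) T) : CostructuredArrow (incl1 σ) (insert a T) :=
  ⟨c.left, c.right, c.hom ≫ homOfLE (Finset.subset_insert a T)⟩

noncomputable def stepPt : C :=
  pushout (X.map (homOfLE (Finset.empty_subset {a}))) (colimit.ι (cubeDiagram X T) (obj0 T))

noncomputable def stepApp (U : Finset σ) (hU : U.card ≤ 1) (hf : U ⊆ insert a T) :
    X.obj U ⟶ stepPt X T a :=
  dite (a ∈ U)
    (fun h => X.map (homOfLE (show U ≤ {a} from fun x hx =>
        Finset.mem_singleton.mpr (Finset.card_le_one.mp hU x hx a h))) ≫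
      pushout.inl _ _)
    (fun h => colimit.ι (cubeDiagram X T)
        ⟨⟨U, hU⟩, ⟨⟨⟩⟩, homOfLE (show U ≤ T from fun x hx =>
          (Finset.mem_insert.mp (hf hx)).resolve_left (fun hxa => h (hxa ▸ hx)))⟩ ≫
      pushout.inr _ _)

noncomputable def stepCocone : Cocone (cubeDiagram X (insert a T)) where
  pt := stepPt X T a
  ι :=
    { app := fun c => stepApp X T a c.left.obj c.left.property (leOfHom c.hom)
      naturality := by
        rintro ⟨⟨U, hU⟩, ⟨⟨⟩⟩, f⟩ ⟨⟨U', hU'⟩, ⟨⟨⟩⟩, f'⟩ ⟨⟨φl⟩, φr, hφ⟩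
        show X.map (homOfLE (leOfHom φl)) ≫ stepApp X T a U' hU' (leOfHom f') =
          stepApp X T a U hU (leOfHom f) ≫ 𝟙 _
        rw [Category.comp_id]
        by_cases h : a ∈ U
        · have h' : a ∈ U' := leOfHom φl h
          erw [stepApp, dif_pos h', stepApp, dif_pos h, ← Category.assoc,
            map_comp_eq X _ _ (fun x hx =>
              Finset.mem_singleton.mpr (Finset.card_le_one.mp hU x hx a h))]
        · by_cases h' : a ∈ U'
          · have hU0 : U = ∅ := Finset.eq_empty_iff_forall_notMem.mpr (fun x hx => by
              have hx' : x ∈ U' := leOfHom φl hx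
              have hxa : x = a := Finset.card_le_one.mp hU' x hx' a h'
              exact h (hxa ▸ hx))
            subst hU0
            erw [stepApp, dif_pos h', stepApp, dif_neg h, ← Category.assoc,
              map_comp_eq X _ _ (Finset.empty_subset {a}), pushout.condition]
            rfl
          · have hsU : U ≤ T := fun x hx =>
              (Finset.mem_insert.mp (leOfHom f hx)).resolve_left (fun hxa => h (hxa ▸ hx))
            have hsU' : U' ≤ T := fun x hx =>
              (Finset.mem_insert.mp (leOfHom f' hx)).resolve_left (fun hxa => h' (hxa ▸ hx))
            erw [stepApp, dif_neg h', stepApp, dif_neg h, ← Category.assoc]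
            have hw := colimit.w (cubeDiagram X T)
              (show (⟨⟨U, hU⟩, ⟨⟨⟩⟩, homOfLE hsU⟩ : CostructuredArrow (incl1 σ) T) ⟶
                  ⟨⟨U', hU'⟩, ⟨⟨⟩⟩, homOfLE hsU'⟩ from
                ⟨⟨φl⟩, 𝟙 _, Subsingleton.elim _ _⟩)
            dsimp at hw
            erw [hw] }

noncomputable def stepIsColimit (ha : a ∉ T) : IsColimit (stepCocone X T a) := by
  refine
    { desc := fun d => pushout.desc (d.ι.app (objS a (Finset.mem_insert_self a T)))
        (colimit.desc (cubeDiagram X T)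
          { pt := d.pt
            ι :=
              { app := fun c => d.ι.app (extObj T a c)
                naturality := fun c c' f => by
                  have := d.ι.naturality (show extObj T a c ⟶ extObj T a c' from
                    ⟨f.left, f.right, Subsingleton.elim _ _⟩)
                  exact this } }) ?_
      fac := ?_
      uniq := ?_ }
  · have hw := d.ι.naturality (show extObj T a (obj0 T) ⟶ objS a (Finset.mem_insert_self a T) from
      ⟨show (⟨∅, by simp⟩ : ObjectProperty.FullSubcategory (fun T : Finset σ => T.card ≤ 1)) ⟶ ⟨{a}, by simp⟩
        from ⟨homOfLE (Finset.empty_subset _)⟩, 𝟙 _, Subsingleton.elim _ _⟩)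
    dsimp at hw
    rw [Category.comp_id] at hw
    erw [hw, colimit.ι_desc]
  · intro d
    rintro ⟨⟨U, hU⟩, ⟨⟨⟩⟩, f⟩
    dsimp [stepCocone]
    by_cases h : a ∈ U
    · have hUa : U = {a} := le_antisymm
        (fun x hx => Finset.mem_singleton.mpr (Finset.card_le_one.mp hU x hx a h))
        (Finset.singleton_subset_iff.mpr h)
      subst hUa
      erw [stepApp, dif_pos h, map_eq_id, Category.id_comp, pushout.inl_desc]
      rfl
    · erw [stepApp, dif_neg h, Category.assoc, pushout.inr_desc, colimit.ι_desc]
      rfl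
  · intro d m hm
    apply pushout.hom_ext
    · have := hm (objS a (Finset.mem_insert_self a T))
      dsimp [stepCocone, objS] at this
      erw [stepApp, dif_pos (show a ∈ ({a} : Finset σ) from Finset.mem_singleton_self a),
        map_eq_id, Category.id_comp] at this
      erw [this, pushout.inl_desc]
      rfl
    · apply colimit.hom_ext
      rintro ⟨⟨U, hU⟩, ⟨⟨⟩⟩, f⟩
      erw [pushout.inr_desc, colimit.ι_desc]
      dsimp only [extObj]
      have hja : a ∉ U := fun hx => ha (leOfHom f hx)
      have h2 := hm (extObj T a ⟨⟨U, hU⟩, ⟨⟨⟩⟩, f⟩)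
      dsimp [stepCocone, extObj] at h2
      erw [stepApp, dif_neg hja] at h2
      erw [← h2]
      exact (Category.assoc _ (pushout.inr _ _) m).symm
end Step

lemma hasPointwiseLKE (X : Finset σ ⥤ C) :
    HasPointwiseLeftKanExtension (incl1 σ) (incl1 σ ⋙ X) := by
  intro T
  induction T using Finset.induction_on with
  | empty =>
    exact HasColimit.mk ⟨_, colimitOfDiagramTerminal obj0Terminal (cubeDiagram X ∅)⟩
  | @insert a T ha IH =>
    exact HasColimit.mk ⟨stepCocone X T a, stepIsColimit X T a ha⟩

noncomputable def pwOfScc (X : Finset σ ⥤ C)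
    (hX : X.IsLeftKanExtension (𝟙 (incl1 σ ⋙ X))) (T : Finset σ) : cubeUP X T := by
  haveI := hX
  haveI := hasPointwiseLKE (σ := σ) X
  intro W g₀ g hcomp
  exact cubeUP_of_isColimit
    (Functor.isPointwiseLeftKanExtensionOfIsLeftKanExtension X (𝟙 (incl1 σ ⋙ X)) T)
    g₀ g hcomp

end Existence


/-- collapse of two maps against a tail -/
lemma map_map_assoc (X : Finset σ ⥤ C) {a b c : Finset σ} (f : a ⟶ b) (g : b ⟶ c) (h : a ≤ c)
    {W : C} (t : X.obj c ⟶ W) : X.map f ≫ X.map g ≫ t = X.map (homOfLE h) ≫ t := by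
  rw [← Category.assoc, map_comp_eq X f g h]

lemma comp_fmap {τ : Type} [DecidableEq τ] (X : Finset σ ⥤ C) (Φ : Finset τ ⥤ Finset σ)
    {a b : Finset τ} (f : a ⟶ b) (h : Φ.obj a ≤ Φ.obj b) :
    (Φ ⋙ X).map f = X.map (homOfLE h) := fmap_congr X _ _

lemma scc_of_cubeUP (X : Finset σ ⥤ C) (h : ∀ T, cubeUP X T) :
    X.IsLeftKanExtension (𝟙 (incl1 σ ⋙ X)) :=
  LeftExtension.IsPointwiseLeftKanExtension.isLeftKanExtension
    (E := LeftExtension.mk X (𝟙 _)) (fun T => isColimit_of_cubeUP (h T))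

section Transfer

variable (s : σ)

/-- the embedding of the complement of `s` -/
def semb : {x : σ // x ≠ s} ↪ σ := Function.Embedding.subtype _

/-- inclusion of the face not containing `s` -/
def jF : Finset {x : σ // x ≠ s} ⥤ Finset σ :=
  Monotone.functor (f := fun T => T.map (semb s))
    (fun _ _ h => Finset.map_subset_map.mpr h)

/-- the face containing `s` -/
def kF : Finset {x : σ // x ≠ s} ⥤ Finset σ :=
  Monotone.functor (f := fun T => insert s (T.map (semb s)))
    (fun _ _ h => Finset.insert_subset_insert s (Finset.map_subset_map.mpr h))

lemma jF_obj (T : Finset {x : σ // x ≠ s}) : (jF s).obj T = T.map (semb s) := rfl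
lemma jF_nonempty {T : Finset {x : σ // x ≠ s}} (hT : T.Nonempty) : ((jF s).obj T).Nonempty :=
  Finset.map_nonempty.mpr hT
lemma kF_obj (T : Finset {x : σ // x ≠ s}) : (kF s).obj T = insert s (T.map (semb s)) := rfl

lemma jF_empty : (jF s).obj ∅ = ∅ := Finset.map_empty _
lemma kF_empty : (kF s).obj ∅ = {s} := by
  rw [kF_obj, Finset.map_empty]; rfl

variable {X : Finset σ ⥤ C}

lemma cubeUP_Y (hUP : ∀ T, cubeUP X T) (T : Finset {x : σ // x ≠ s}) :
    cubeUP (jF s ⋙ X) T := by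
  classical
  intro W g₀ g hcomp
  have hex : ∀ u, u ∈ (jF s).obj T → ∃ v, v ∈ T ∧ (semb s) v = u :=
    fun u hu => Finset.mem_map.mp hu
  have hsing : ∀ u (hu : u ∈ (jF s).obj T),
      ({u} : Finset σ) ≤ (jF s).obj {(hex u hu).choose} := by
    intro u hu
    intro x hx
    obtain rfl := Finset.mem_singleton.mp hx
    rw [jF_obj, Finset.map_singleton]
    exact Finset.mem_singleton.mpr (hex x hu).choose_spec.2.symm
  have hcast : ∀ {v : {x : σ // x ≠ s}} (hv : v ∈ T) (w : {x : σ // x ≠ s}) (hw : w ∈ T)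
      (hwv : w = v) (h1 : (jF s).obj {v} ≤ (jF s).obj {w}),
      X.map (homOfLE h1) ≫ g w hw = g v hv := by
    rintro v hv w hw rfl h1
    rw [map_eq_id, Category.id_comp]
  obtain ⟨m, ⟨hm0, hmS⟩, huniq⟩ := hUP ((jF s).obj T)
    (X.map (homOfLE (Finset.empty_subset ((jF s).obj ∅))) ≫ g₀)
    (fun u hu => X.map (homOfLE (hsing u hu)) ≫ g (hex u hu).choose (hex u hu).choose_spec.1)
    (by
      intro u hu
      rw [map_map_assoc X _ _ (Finset.empty_subset _)]
      have hc := hcomp (hex u hu).choose (hex u hu).choose_spec.1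
      rw [comp_fmap X (jF s) _
        (leOfHom ((jF s).map (homOfLE (Finset.empty_subset _))))] at hc
      rw [← hc, map_map_assoc X _ _ (Finset.empty_subset _)])
  refine ⟨m, ⟨?_, ?_⟩, ?_⟩
  · rw [comp_fmap X (jF s) _ (leOfHom ((jF s).map (homOfLE (Finset.empty_subset T)))),
      ← map_map_assoc X (homOfLE (le_of_eq (jF_empty s))) (homOfLE (Finset.empty_subset _))
        (leOfHom ((jF s).map (homOfLE (Finset.empty_subset T)))) m,
      hm0, map_map_assoc X _ _ le_rfl, map_eq_id, Category.id_comp]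
  · intro v hv
    have hu : (semb s) v ∈ (jF s).obj T := Finset.mem_map_of_mem _ hv
    have h1 : (jF s).obj {v} ≤ {(semb s) v} := le_of_eq (Finset.map_singleton _ v)
    have hpv : (hex ((semb s) v) hu).choose = v :=
      (semb s).injective (hex ((semb s) v) hu).choose_spec.2
    have hle1 : (jF s).obj {v} ≤ (jF s).obj {(hex ((semb s) v) hu).choose} := by
      rw [hpv]
    rw [comp_fmap X (jF s) _ (leOfHom ((jF s).map (homOfLE (Finset.singleton_subset_iff.mpr hv)))),
      ← map_map_assoc X (homOfLE h1) (homOfLE (Finset.singleton_subset_iff.mpr hu)) _ m,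
      hmS ((semb s) v) hu, map_map_assoc X _ _ hle1, hcast hv _ _ hpv]
  · intro m' hm'
    apply huniq
    constructor
    · have hc0' := hm'.1
      rw [comp_fmap X (jF s) _ (leOfHom ((jF s).map (homOfLE (Finset.empty_subset T))))] at hc0'
      rw [← map_map_assoc X (homOfLE (Finset.empty_subset ((jF s).obj ∅)))
        (homOfLE (leOfHom ((jF s).map (homOfLE (Finset.empty_subset T))))) _ m', hc0']
    · intro u hu
      have hv := (hex u hu).choose_spec.1
      have hcS' := hm'.2 (hex u hu).choose hv
      rw [comp_fmap X (jF s) _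
        (leOfHom ((jF s).map (homOfLE (Finset.singleton_subset_iff.mpr hv))))] at hcS'
      rw [← map_map_assoc X (homOfLE (hsing u hu))
        (homOfLE (leOfHom ((jF s).map (homOfLE (Finset.singleton_subset_iff.mpr hv))))) _ m',
        hcS']

lemma cubeUP_Z (hUP : ∀ T, cubeUP X T) (T : Finset {x : σ // x ≠ s}) :
    cubeUP (kF s ⋙ X) T := by
  classical
  intro W g₀ g hcomp
  have hsK : ∀ A : Finset {x : σ // x ≠ s}, s ∈ (kF s).obj A :=
    fun A => Finset.mem_insert_self _ _
  have hk0le : (kF s).obj ∅ ≤ ({s} : Finset σ) := le_of_eq (kF_empty s)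
  have hk0ge : ({s} : Finset σ) ≤ (kF s).obj ∅ := le_of_eq (kF_empty s).symm
  have hexk : ∀ u, u ∈ (kF s).obj T → u ≠ s → ∃ v, v ∈ T ∧ (semb s) v = u :=
    fun u hu hne => Finset.mem_map.mp ((Finset.mem_insert.mp hu).resolve_left hne)
  have hsingk : ∀ u (hu : u ∈ (kF s).obj T) (hne : u ≠ s),
      ({u} : Finset σ) ≤ (kF s).obj {(hexk u hu hne).choose} := by
    intro u hu hne x hx
    obtain rfl := Finset.mem_singleton.mp hx
    rw [kF_obj, Finset.map_singleton]
    exact Finset.mem_insert_of_mem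
      (Finset.mem_singleton.mpr (hexk x hu hne).choose_spec.2.symm)
  have hscast : ∀ u (hu : u ∈ (kF s).obj T) (hus : u = s) (h1 : ({u} : Finset σ) ≤ (kF s).obj ∅),
      True := fun _ _ _ _ => trivial
  have hcastk : ∀ {v : {x : σ // x ≠ s}} (hv : v ∈ T) (w : {x : σ // x ≠ s}) (hw : w ∈ T)
      (hwv : w = v) {U : Finset σ} (h1 : U ≤ (kF s).obj {w}) (h2 : U ≤ (kF s).obj {v}),
      X.map (homOfLE h1) ≫ g w hw = X.map (homOfLE h2) ≫ g v hv := by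
    rintro v hv w hw rfl U h1 h2
    rfl
  -- the X-level data
  obtain ⟨m, ⟨hm0, hmS⟩, huniq⟩ := hUP ((kF s).obj T)
    (X.map (homOfLE (Finset.empty_subset ((kF s).obj ∅))) ≫ g₀)
    (fun u hu => dite (u = s)
      (fun h => X.map (homOfLE (le_of_eq (by rw [h, kF_empty s] :
          ({u} : Finset σ) = (kF s).obj ∅))) ≫ g₀)
      (fun hne => X.map (homOfLE (hsingk u hu hne)) ≫
        g (hexk u hu hne).choose (hexk u hu hne).choose_spec.1))
    (by
      intro u hu
      by_cases h : u = s
      · rw [dif_pos h, map_map_assoc X _ _ (Finset.empty_subset _)]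
      · rw [dif_neg h, map_map_assoc X _ _ (Finset.empty_subset _)]
        have hc := hcomp (hexk u hu h).choose (hexk u hu h).choose_spec.1
        rw [comp_fmap X (kF s) _
          (leOfHom ((kF s).map (homOfLE (Finset.empty_subset _))))] at hc
        rw [← hc, map_map_assoc X _ _ (Finset.empty_subset _)])
  refine ⟨m, ⟨?_, ?_⟩, ?_⟩
  · rw [comp_fmap X (kF s) _ (leOfHom ((kF s).map (homOfLE (Finset.empty_subset T)))),
      ← map_map_assoc X (homOfLE hk0le) (homOfLE (Finset.singleton_subset_iff.mpr (hsK T)))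
        (leOfHom ((kF s).map (homOfLE (Finset.empty_subset T)))) m,
      hmS s (hsK T), dif_pos rfl, map_map_assoc X _ _ le_rfl, map_eq_id, Category.id_comp]
  · intro v hv
    have hKvT : (kF s).obj {v} ≤ (kF s).obj T :=
      leOfHom ((kF s).map (homOfLE (Finset.singleton_subset_iff.mpr hv)))
    rw [comp_fmap X (kF s) _ hKvT]
    have hc := hcomp v hv
    rw [comp_fmap X (kF s) _
      (leOfHom ((kF s).map (homOfLE (Finset.empty_subset _))))] at hc
    refine cubeUP.homext (hUP ((kF s).obj {v})) _ _ ?_ ?_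
    · rw [map_map_assoc X (homOfLE (Finset.empty_subset _)) (homOfLE hKvT)
        (Finset.empty_subset _) m, hm0, ← hc,
        map_map_assoc X _ _ (Finset.empty_subset _)]
    · intro u hu
      have hu' : u ∈ (kF s).obj T := hKvT hu
      rw [map_map_assoc X (homOfLE (Finset.singleton_subset_iff.mpr hu)) (homOfLE hKvT)
        (Finset.singleton_subset_iff.mpr hu') m, hmS u hu']
      by_cases hus : u = s
      · rw [dif_pos hus]
        have h_u_k0 : ({u} : Finset σ) ≤ (kF s).obj ∅ :=
          le_of_eq (by rw [hus, kF_empty s])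
        rw [← map_map_assoc X (homOfLE h_u_k0)
          (homOfLE (leOfHom ((kF s).map (homOfLE (Finset.empty_subset ({v} : Finset _))))))
          (Finset.singleton_subset_iff.mpr hu) (g v hv), hc]
      · rw [dif_neg hus]
        have huev : (semb s) v = u := by
          obtain ⟨v', hv1', hv2'⟩ :=
            Finset.mem_map.mp ((Finset.mem_insert.mp hu).resolve_left hus)
          obtain rfl := Finset.mem_singleton.mp hv1'
          exact hv2'
        have hpv : (hexk u hu' hus).choose = v :=
          (semb s).injective ((hexk u hu' hus).choose_spec.2.trans huev.symm)
        exact hcastk hv _ (hexk u hu' hus).choose_spec.1 hpv _ _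
  · intro m' hm'
    have hc0' := hm'.1
    rw [comp_fmap X (kF s) _ (leOfHom ((kF s).map (homOfLE (Finset.empty_subset T))))] at hc0'
    apply huniq
    constructor
    · rw [← map_map_assoc X (homOfLE (Finset.empty_subset ((kF s).obj ∅)))
        (homOfLE (leOfHom ((kF s).map (homOfLE (Finset.empty_subset T)))))
        (Finset.empty_subset _) m', hc0']
    · intro u hu
      by_cases hus : u = s
      · rw [dif_pos hus]
        have h_u_k0 : ({u} : Finset σ) ≤ (kF s).obj ∅ :=
          le_of_eq (by rw [hus, kF_empty s])
        rw [← map_map_assoc X (homOfLE h_u_k0)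
          (homOfLE (leOfHom ((kF s).map (homOfLE (Finset.empty_subset T)))))
          (Finset.singleton_subset_iff.mpr hu) m', hc0']
      · rw [dif_neg hus]
        have hv' := (hexk u hu hus).choose_spec.1
        have hcS' := hm'.2 (hexk u hu hus).choose hv'
        rw [comp_fmap X (kF s) _
          (leOfHom ((kF s).map (homOfLE (Finset.singleton_subset_iff.mpr hv'))))] at hcS'
        rw [← map_map_assoc X (homOfLE (hsingk u hu hus))
          (homOfLE (leOfHom ((kF s).map (homOfLE (Finset.singleton_subset_iff.mpr hv')))))
          (Finset.singleton_subset_iff.mpr hu) m', hcS']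

lemma incl_fmap {D' : Type*} [Category D'] (P : Finset σ → Prop) (G : Finset σ ⥤ D')
    {a b : ObjectProperty.FullSubcategory P} (f : a ⟶ b) (h : a.obj ≤ b.obj) :
    (ObjectProperty.ι P ⋙ G).map f = G.map (homOfLE h) := fmap_congr G _ _

lemma comp_fmapF {τ : Type} [DecidableEq τ] (X : Finset σ ⥤ C) {D' : Type*} [Category D']
    (F : C ⥤ D') (Φ : Finset τ ⥤ Finset σ) {a b : Finset τ} (f : a ⟶ b)
    (h : Φ.obj a ≤ Φ.obj b) :
    ((Φ ⋙ X) ⋙ F).map f = (X ⋙ F).map (homOfLE h) :=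
  congrArg (fun t => F.map t) (fmap_congr X (Φ.map f) (homOfLE h))

lemma Fmap_nested (X : Finset σ ⥤ C) {D' : Type*} [Category D'] (F : C ⥤ D') {a b : Finset σ}
    (f g : a ⟶ b) : F.map (X.map f) = (X ⋙ F).map g :=
  congrArg (fun t => F.map t) (fmap_congr X f g)

end Transfer

section Final

variable {S : Type} [Fintype S] [DecidableEq S] {C : Type*} [Category.{v₁} C] {D : Type*} [Category.{v₂} D]
  (F : C ⥤ D) (s : S) (X : Finset S ⥤ C)

/-- restriction of a cone over the punctured `S`-cube to the punctured face avoiding `s` -/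
def coneW (c : Cone (ObjectProperty.ι (fun T : Finset S => T.Nonempty) ⋙ (X ⋙ F))) :
    Cone (ObjectProperty.ι (fun T : Finset {x : S // x ≠ s} => T.Nonempty) ⋙
      ((jF s ⋙ X) ⋙ F)) where
  pt := c.pt
  π :=
    { app := fun T => c.π.app ⟨(jF s).obj T.obj, jF_nonempty s T.property⟩
      naturality := fun A B f => by
        dsimp
        rw [Category.id_comp]
        have hw := c.w (show (⟨(jF s).obj A.obj, jF_nonempty s A.property⟩ :
            ObjectProperty.FullSubcategory (fun T : Finset S => T.Nonempty)) ⟶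
            ⟨(jF s).obj B.obj, jF_nonempty s B.property⟩ from
          ⟨homOfLE (leOfHom ((jF s).map f.hom))⟩)
        rw [incl_fmap _ _ _ (leOfHom ((jF s).map f.hom))] at hw
        rw [← hw]
        congr 1 }

variable {F s X} in
lemma final
    (hY : IsCartesianCube ((jF s ⋙ X) ⋙ F))
    (hZ : IsCartesianCube ((kF s ⋙ X) ⋙ F)) :
    IsCartesianCube (X ⋙ F) := by
  classical
  obtain ⟨LY⟩ := hY
  obtain ⟨LZ⟩ := hZ
  have hj0 : (jF s).obj ∅ ≤ (∅ : Finset S) := le_of_eq (jF_empty s)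
  have hj0' : (∅ : Finset S) ≤ (jF s).obj ∅ := Finset.empty_subset _
  -- cone naturality in convenient form
  have hπ : ∀ (c : Cone (ObjectProperty.ι (fun T : Finset S => T.Nonempty) ⋙ (X ⋙ F)))
      (A B : Finset S) (hA : A.Nonempty) (hB : B.Nonempty) (hAB : A ≤ B),
      c.π.app ⟨A, hA⟩ ≫ (X ⋙ F).map (homOfLE hAB) = c.π.app ⟨B, hB⟩ := by
    intro c A B hA hB hAB
    have := c.w (show (⟨A, hA⟩ : ObjectProperty.FullSubcategory (fun T : Finset S => T.Nonempty)) ⟶ ⟨B, hB⟩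
      from ⟨homOfLE hAB⟩)
    rw [incl_fmap _ _ _ hAB] at this
    exact this
  have hfacY : ∀ (c : Cone (ObjectProperty.ι (fun T : Finset S => T.Nonempty) ⋙ (X ⋙ F)))
      (T : Finset {x : S // x ≠ s}) (hT : T.Nonempty) (hle : (jF s).obj ∅ ≤ (jF s).obj T),
      LY.lift (coneW F s X c) ≫ (X ⋙ F).map (homOfLE hle)
        = c.π.app ⟨(jF s).obj T, jF_nonempty s hT⟩ := by
    intro c T hT hle
    have hf := LY.fac (coneW F s X c) ⟨T, hT⟩
    dsimp [coneW] at hf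
    rw [Fmap_nested X F ((jF s).map (homOfLE (Finset.empty_subset T))) (homOfLE hle)] at hf
    exact hf
  -- the main computation
  have hmain : ∀ (c : Cone (ObjectProperty.ι (fun T : Finset S => T.Nonempty) ⋙ (X ⋙ F)))
      (U : Finset S) (hne : U.Nonempty) (hle : (jF s).obj ∅ ≤ U),
      LY.lift (coneW F s X c) ≫ (X ⋙ F).map (homOfLE hle) = c.π.app ⟨U, hne⟩ := by
    intro c U hne hle
    by_cases hs : s ∈ U
    · -- U contains s
      set T : Finset {x : S // x ≠ s} := (U.erase s).subtype _ with hT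
      have hjT : (jF s).obj T = U.erase s := by
        rw [jF_obj, hT, semb, Finset.subtype_map]
        exact Finset.filter_eq_self.mpr (fun x hx => Finset.ne_of_mem_erase hx)
      have hkT : (kF s).obj T = U := by
        rw [kF_obj, ← jF_obj, hjT, Finset.insert_erase hs]
      by_cases hTne : T.Nonempty
      · -- jF T is nonempty, go through the face
        have hjne : ((jF s).obj T).Nonempty := jF_nonempty s hTne
        have hjU : (jF s).obj T ≤ U := by
          rw [hjT]; exact Finset.erase_subset s U
        have hjle : (jF s).obj ∅ ≤ (jF s).obj T :=
          leOfHom ((jF s).map (homOfLE (Finset.empty_subset T)))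
        erw [← map_comp_eq (X ⋙ F) (homOfLE hjle) (homOfLE hjU) hle, ← Category.assoc,
          hfacY c T hTne, hπ c _ _ hjne hne hjU]
      · -- U = {s} : use the cartesianness of the `Z`-cube
        have hUs : U = {s} := by
          have h1 : U.erase s = ∅ := by
            by_contra hcon
            apply hTne
            obtain ⟨x, hx⟩ := Finset.nonempty_of_ne_empty hcon
            exact ⟨⟨x, Finset.ne_of_mem_erase hx⟩, Finset.mem_subtype.mpr hx⟩
          have := Finset.insert_erase hs
          rw [h1] at this
          exact this.symm
        subst hUs
        have hk0ge : ({s} : Finset S) ≤ (kF s).obj ∅ := le_of_eq (kF_empty s).symm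
        have hk0le : (kF s).obj ∅ ≤ ({s} : Finset S) := le_of_eq (kF_empty s)
        have hab : LY.lift (coneW F s X c) ≫ (X ⋙ F).map (homOfLE (hle.trans hk0ge))
            = c.π.app ⟨{s}, hne⟩ ≫ (X ⋙ F).map (homOfLE hk0ge) := by
          apply LZ.hom_ext
          rintro ⟨T', hT'⟩
          dsimp
          have hjkT' : (jF s).obj T' ≤ (kF s).obj T' := by
            rw [jF_obj, kF_obj]; exact Finset.subset_insert s _
          have hkne : ((kF s).obj T').Nonempty := by
            rw [kF_obj]; exact Finset.insert_nonempty s _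
          have hjle' : (jF s).obj ∅ ≤ (jF s).obj T' :=
            leOfHom ((jF s).map (homOfLE (Finset.empty_subset T')))
          have hkle : (kF s).obj ∅ ≤ (kF s).obj T' :=
            leOfHom ((kF s).map (homOfLE (Finset.empty_subset T')))
          have hsk : ({s} : Finset S) ≤ (kF s).obj T' :=
            Finset.singleton_subset_iff.mpr (Finset.mem_insert_self s _)
          rw [Fmap_nested X F ((kF s).map (homOfLE (Finset.empty_subset T'))) (homOfLE hkle)]
          have hL : (LY.lift (coneW F s X c) ≫ (X ⋙ F).map (homOfLE (hle.trans hk0ge))) ≫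
              (X ⋙ F).map (homOfLE hkle) = c.π.app ⟨(kF s).obj T', hkne⟩ := by
            erw [Category.assoc, map_comp_eq (X ⋙ F) _ _ (hjle'.trans hjkT'),
              ← map_comp_eq (X ⋙ F) (homOfLE hjle') (homOfLE hjkT') (hjle'.trans hjkT'),
              ← Category.assoc, hfacY c T' hT' hjle',
              hπ c _ _ (show ((jF s).obj T').Nonempty from jF_nonempty s hT')
                hkne hjkT']
          have hR : (c.π.app ⟨{s}, hne⟩ ≫ (X ⋙ F).map (homOfLE hk0ge)) ≫
              (X ⋙ F).map (homOfLE hkle) = c.π.app ⟨(kF s).obj T', hkne⟩ := by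
            rw [Category.assoc, map_comp_eq (X ⋙ F) _ _ hsk,
              hπ c _ _ (Finset.singleton_nonempty s) hkne hsk]
          exact hL.trans hR.symm
        erw [← map_comp_eq (X ⋙ F) (homOfLE (hle.trans hk0ge)) (homOfLE hk0le) hle,
          ← Category.assoc, hab, Category.assoc, map_comp_eq (X ⋙ F) _ _ le_rfl, map_eq_id]
        exact Category.comp_id _
    · -- U avoids s
      set T : Finset {x : S // x ≠ s} := U.subtype _ with hT
      have hjT : (jF s).obj T = U := by
        rw [jF_obj, hT, semb, Finset.subtype_map]
        exact Finset.filter_eq_self.mpr (fun x hx hxn => hs (hxn ▸ hx))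
      have hTne : T.Nonempty := by
        obtain ⟨x, hx⟩ := hne
        exact ⟨⟨x, fun hxs => hs (hxs ▸ hx)⟩, Finset.mem_subtype.mpr hx⟩
      have hjU : (jF s).obj T ≤ U := le_of_eq hjT
      have hjle : (jF s).obj ∅ ≤ (jF s).obj T :=
        leOfHom ((jF s).map (homOfLE (Finset.empty_subset T)))
      erw [← map_comp_eq (X ⋙ F) (homOfLE hjle) (homOfLE hjU) hle, ← Category.assoc,
        hfacY c T hTne, hπ c _ _ (show ((jF s).obj T).Nonempty from
          jF_nonempty s hTne) hne hjU]
  constructor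
  refine { lift := fun c => LY.lift (coneW F s X c) ≫ (X ⋙ F).map (homOfLE hj0),
           fac := ?_, uniq := ?_ }
  · rintro c ⟨U, hU⟩
    show (LY.lift (coneW F s X c) ≫ (X ⋙ F).map (homOfLE hj0)) ≫
      (X ⋙ F).map (homOfLE (Finset.empty_subset U)) = c.π.app ⟨U, hU⟩
    rw [Category.assoc, map_comp_eq (X ⋙ F) _ _ (hj0.trans (Finset.empty_subset U))]
    exact hmain c U hU _
  · intro c m hm
    have hlift : m ≫ (X ⋙ F).map (homOfLE hj0') = LY.lift (coneW F s X c) := by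
      apply LY.uniq (coneW F s X c)
      rintro ⟨T, hT⟩
      have hjle : (jF s).obj ∅ ≤ (jF s).obj T :=
        leOfHom ((jF s).map (homOfLE (Finset.empty_subset T)))
      show (m ≫ (X ⋙ F).map (homOfLE hj0')) ≫ (X ⋙ F).map (homOfLE hjle)
        = c.π.app ⟨(jF s).obj T, jF_nonempty s hT⟩
      rw [Category.assoc, map_comp_eq (X ⋙ F) _ _ (Finset.empty_subset _)]
      have hmm : m ≫ (X ⋙ F).map (homOfLE (Finset.empty_subset ((jF s).obj T)))
          = c.π.app ⟨(jF s).obj T, jF_nonempty s hT⟩ :=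
        hm ⟨(jF s).obj T, jF_nonempty s hT⟩
      exact hmm
    have hms : (X ⋙ F).map (homOfLE hj0') ≫ (X ⋙ F).map (homOfLE hj0) = 𝟙 _ :=
      map_self (X ⋙ F) _ _
    show m = LY.lift (coneW F s X c) ≫ (X ⋙ F).map (homOfLE hj0)
    erw [← hlift, Category.assoc, hms, Category.comp_id]

end Final

end Stmt14Aux

/-- Every `n`-excisive functor is `(n+1)`-excisive: if `F` sends strongly cocartesian
`(n+1)`-cubes to cartesian `(n+1)`-cubes, it sends strongly cocartesian `(n+2)`-cubes to
cartesian `(n+2)`-cubes. -/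
theorem stmt14 {C : Type*} [Category C] {D : Type*} [Category D]
    [HasPushouts C] [HasTerminal C] [HasPullbacks D]
    (n : ℕ) (F : C ⥤ D)
    (h : ∀ (S : Type) [Fintype S] [DecidableEq S], Fintype.card S = n + 1 →
      ∀ X : Finset S ⥤ C, IsStronglyCocartesianCube X → IsCartesianCube (X ⋙ F)) :
    ∀ (S : Type) [Fintype S] [DecidableEq S], Fintype.card S = n + 2 →
      ∀ X : Finset S ⥤ C, IsStronglyCocartesianCube X → IsCartesianCube (X ⋙ F) := by
  intro S _ _ hcard X hX
  classical
  have hpos : 0 < Fintype.card S := by rw [hcard]; omega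
  obtain ⟨s⟩ := Fintype.card_pos_iff.mp hpos
  have hUP : ∀ T, Stmt14Aux.cubeUP X T := Stmt14Aux.pwOfScc X hX
  have sccY : IsStronglyCocartesianCube (Stmt14Aux.jF s ⋙ X) :=
    Stmt14Aux.scc_of_cubeUP _ (Stmt14Aux.cubeUP_Y s hUP)
  have sccZ : IsStronglyCocartesianCube (Stmt14Aux.kF s ⋙ X) :=
    Stmt14Aux.scc_of_cubeUP _ (Stmt14Aux.cubeUP_Z s hUP)
  have hcard' : Fintype.card {x : S // x ≠ s} = n + 1 := by
    have h1 : Fintype.card {x : S // ¬ x = s} = Fintype.card S - Fintype.card {x : S // x = s} :=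
      Fintype.card_subtype_compl (fun x : S => x = s)
    rw [Fintype.card_subtype_eq, hcard] at h1
    exact h1
  have hY := h {x : S // x ≠ s} hcard' (Stmt14Aux.jF s ⋙ X) sccY
  have hZ := h {x : S // x ≠ s} hcard' (Stmt14Aux.kF s ⋙ X) sccZ
  exact Stmt14Aux.final hY hZ
end
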